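/- Every cubic tree, that is, every graph obtained from a tree by adding half-edges so that every vertex becomes incident with exactly three edges, is edge-reflexive. -/

import Mathlib

open SimpleGraph

/-- A `k`-coloring of a graph `X`: a partition of the vertex set into `k`
(possibly empty) independent sets, the color classes of the coloring. -/
def IsColoring {V : Type*} (k : ℕ) (X : SimpleGraph V) (c : Fin k → Set V) : Prop :=
  (∀ v : V, ∃! i : Fin k, v ∈ c i) ∧
  ∀ i : Fin k, ∀ u ∈ c i, ∀ w ∈ c i, ¬ X.Adj u w

/-- `S` occurs as a color class in some `k`-coloring of `X`. -/
def IsColorClass {V : Type*} (k : ℕ) (X : SimpleGraph V) (S : Set V) : Prop :=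
  ∃ c : Fin k → Set V, IsColoring k X c ∧ ∃ i, c i = S

/-- The `k`-coloring complex `B(X)`: vertices are the color classes of
`k`-colorings of `X`, two of them adjacent if they occur together in some
`k`-coloring of `X`. -/
def ColoringComplex {V : Type*} (k : ℕ) (X : SimpleGraph V) :
    SimpleGraph {S : Set V // IsColorClass k X S} where
  Adj C D := C ≠ D ∧ ∃ c : Fin k → Set V,
    IsColoring k X c ∧ (∃ i, c i = C.1) ∧ (∃ j, c j = D.1)
  symm := ⟨by
    rintro C D ⟨hne, c, hc, hi, hj⟩
    exact ⟨hne.symm, c, hc, hj, hi⟩⟩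
  loopless := ⟨by rintro C ⟨hne, -⟩; exact hne rfl⟩

/-- The canonical map `φ_X`, sending a vertex `v` to the set of all color
classes containing `v`. -/
def phi {V : Type*} (k : ℕ) (X : SimpleGraph V) (v : V) :
    Set {S : Set V // IsColorClass k X S} :=
  {C | v ∈ C.1}

/-- `X` is reflexive for `k`-colorings: the canonical map `φ_X` is a graph
isomorphism from `X` onto `B²(X) = B(B(X))`. -/
def IsReflexive {V : Type*} (k : ℕ) (X : SimpleGraph V) : Prop :=
  ∃ f : X ≃g ColoringComplex k (ColoringComplex k X),
    ∀ v : V, (f v : {T // IsColorClass k (ColoringComplex k X) T}).1 = phi k X v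

/-- `X` is colorful for `k`-colorings: any two distinct vertices lie in
different color classes of some `k`-coloring of `X`. -/
def Colorful {V : Type*} (k : ℕ) (X : SimpleGraph V) : Prop :=
  ∀ x y : V, x ≠ y → ∃ c : Fin k → Set V, IsColoring k X c ∧
    ∃ i j : Fin k, i ≠ j ∧ x ∈ c i ∧ y ∈ c j

/-- A cubic graph, possibly with half-edges (edges incident with a single
vertex, recorded as edges whose set of ends is a singleton), without parallel
edges: every vertex is incident with exactly three edges. -/
structure CubicGraph (V E : Type*) [DecidableEq V] where
  ends : E → Finset V
  ends_card : ∀ e, (ends e).card = 1 ∨ (ends e).card = 2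
  no_parallel : ∀ e f, (ends e).card = 2 → ends e = ends f → e = f
  cubic : ∀ v : V, ∃ a b c : E, a ≠ b ∧ a ≠ c ∧ b ≠ c ∧
    ∀ f : E, v ∈ ends f ↔ f = a ∨ f = b ∨ f = c

/-- The line graph of a cubic graph: its vertices are the edges of `G`
(including half-edges), two of them adjacent when they share an endpoint. -/
def lineGraph {V E : Type*} [DecidableEq V] (G : CubicGraph V E) : SimpleGraph E where
  Adj e f := e ≠ f ∧ (G.ends e ∩ G.ends f).Nonempty
  symm := ⟨by rintro e f ⟨hne, hint⟩; exact ⟨hne.symm, by rwa [Finset.inter_comm]⟩⟩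
  loopless := ⟨by rintro e ⟨hne, -⟩; exact hne rfl⟩

/-- A cubic graph is edge-reflexive if its line graph is reflexive for
3-colorings. -/
def EdgeReflexive {V E : Type*} [DecidableEq V] (G : CubicGraph V E) : Prop :=
  IsReflexive 3 (lineGraph G)

/-- A cubic graph is edge-colorful if its line graph is colorful for
3-colorings. -/
def EdgeColorful {V E : Type*} [DecidableEq V] (G : CubicGraph V E) : Prop :=
  Colorful 3 (lineGraph G)

/-- The underlying simple graph of a cubic graph: two vertices are adjacent
when some (full) edge joins them. -/
def underlying {V E : Type*} [DecidableEq V] (G : CubicGraph V E) : SimpleGraph V where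
  Adj u w := u ≠ w ∧ ∃ e, G.ends e = {u, w}
  symm := ⟨by rintro u w ⟨hne, e, he⟩; exact ⟨hne.symm, e, by rwa [Finset.pair_comm]⟩⟩
  loopless := ⟨by rintro u ⟨hne, -⟩; exact hne rfl⟩

namespace CTwork

variable {V E : Type*} [DecidableEq V]

/-! ### Basic notions -/

/-- A proper edge `3`-coloring of a cubic graph. -/
def Proper (G : CubicGraph V E) (κ : E → Fin 3) : Prop :=
  ∀ ⦃f g : E⦄, f ≠ g → (G.ends f ∩ G.ends g).Nonempty → κ f ≠ κ g

/-- A one-factor : every vertex is incident with exactly one edge of `S`. -/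
def OneFactor (G : CubicGraph V E) (S : Set E) : Prop :=
  ∀ v : V, ∃! f, f ∈ S ∧ v ∈ G.ends f

lemma fin3_cases (x y z i : Fin 3) (hxy : x ≠ y) (hxz : x ≠ z) (hyz : y ≠ z) :
    i = x ∨ i = y ∨ i = z := by revert x y z i; decide

lemma fin3_third {i j x : Fin 3} (hij : i ≠ j) (hxi : x ≠ i) (hxj : x ≠ j)
    {y : Fin 3} (hyi : y ≠ i) (hyj : y ≠ j) : x = y := by revert i j x y; decide

lemma pigeon4 {α : Type*} {a b c p q r s : α}
    (hp : p = a ∨ p = b ∨ p = c) (hq : q = a ∨ q = b ∨ q = c)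
    (hr : r = a ∨ r = b ∨ r = c) (hs : s = a ∨ s = b ∨ s = c)
    (hpq : p ≠ q) (hpr : p ≠ r) (hps : p ≠ s) (hqr : q ≠ r) (hqs : q ≠ s) (hrs : r ≠ s) :
    False := by
  rcases hp with rfl|rfl|rfl <;> rcases hq with rfl|rfl|rfl <;>
    rcases hr with rfl|rfl|rfl <;> rcases hs with rfl|rfl|rfl <;> simp_all

variable {G : CubicGraph V E}

lemma shares (v : V) {f g : E} (hf : v ∈ G.ends f) (hg : v ∈ G.ends g) :
    (G.ends f ∩ G.ends g).Nonempty := ⟨v, Finset.mem_inter.2 ⟨hf, hg⟩⟩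

lemma Proper.existsUnique_at (hκ : Proper G κ) (v : V) (i : Fin 3) :
    ∃! f, v ∈ G.ends f ∧ κ f = i := by
  obtain ⟨a, b, c, hab, hac, hbc, hat⟩ := G.cubic v
  have hva : v ∈ G.ends a := (hat a).2 (Or.inl rfl)
  have hvb : v ∈ G.ends b := (hat b).2 (Or.inr (Or.inl rfl))
  have hvc : v ∈ G.ends c := (hat c).2 (Or.inr (Or.inr rfl))
  have dab : κ a ≠ κ b := hκ hab (shares v hva hvb)
  have dac : κ a ≠ κ c := hκ hac (shares v hva hvc)
  have dbc : κ b ≠ κ c := hκ hbc (shares v hvb hvc)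
  have uniq : ∀ g, (v ∈ G.ends g ∧ κ g = i) → ∀ f, (v ∈ G.ends f ∧ κ f = i) → f = g := by
    rintro g ⟨hg, hgi⟩ f ⟨hf, hfi⟩
    by_contra hne
    exact hκ hne (shares v hf hg) (hfi.trans hgi.symm)
  rcases fin3_cases (κ a) (κ b) (κ c) i dab dac dbc with h|h|h
  · exact ⟨a, ⟨hva, h.symm⟩, fun f hf => uniq a ⟨hva, h.symm⟩ f hf⟩
  · exact ⟨b, ⟨hvb, h.symm⟩, fun f hf => uniq b ⟨hvb, h.symm⟩ f hf⟩
  · exact ⟨c, ⟨hvc, h.symm⟩, fun f hf => uniq c ⟨hvc, h.symm⟩ f hf⟩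

lemma Proper.oneFactor (hκ : Proper G κ) (i : Fin 3) : OneFactor G {f | κ f = i} := by
  intro v
  obtain ⟨f, ⟨hfv, hfi⟩, hu⟩ := hκ.existsUnique_at v i
  exact ⟨f, ⟨hfi, hfv⟩, fun g ⟨hgi, hgv⟩ => hu g ⟨hgv, hgi⟩⟩

lemma OneFactor.eq_at {S : Set E} (hS : OneFactor G S) {v : V} {f g : E}
    (hf : f ∈ S) (hfv : v ∈ G.ends f) (hg : g ∈ S) (hgv : v ∈ G.ends g) : f = g :=
  ((hS v).unique ⟨hf, hfv⟩ ⟨hg, hgv⟩)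

lemma OneFactor.exists_at {S : Set E} (hS : OneFactor G S) (v : V) :
    ∃ f, f ∈ S ∧ v ∈ G.ends f := (hS v).exists

/-- The complement of two disjoint one-factors is a one-factor. -/
lemma compl_oneFactor {S T : Set E} (hS : OneFactor G S) (hT : OneFactor G T)
    (hd : S ∩ T = ∅) : OneFactor G {f | f ∉ S ∧ f ∉ T} := by
  have hdis : ∀ x, x ∈ S → x ∈ T → False := by
    intro x h1 h2; have : x ∈ S ∩ T := ⟨h1, h2⟩; rw [hd] at this; exact this
  intro v
  obtain ⟨a, b, c, hab, hac, hbc, hat⟩ := G.cubic v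
  have hva : v ∈ G.ends a := (hat a).2 (Or.inl rfl)
  have hvb : v ∈ G.ends b := (hat b).2 (Or.inr (Or.inl rfl))
  have hvc : v ∈ G.ends c := (hat c).2 (Or.inr (Or.inr rfl))
  obtain ⟨s, ⟨hsS, hsv⟩, -⟩ := hS v
  obtain ⟨t, ⟨htT, htv⟩, -⟩ := hT v
  have hst : s ≠ t := fun h => hdis s hsS (h ▸ htT)
  have hex : ∃ f, (f ∉ S ∧ f ∉ T) ∧ v ∈ G.ends f := by
    by_contra hno
    push_neg at hno
    have hall : ∀ f, v ∈ G.ends f → f ∈ S ∨ f ∈ T := by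
      intro f hf
      by_contra h
      push_neg at h
      exact hno f ⟨h.1, h.2⟩ hf
    have hSu : ∀ x y, x ∈ S → v ∈ G.ends x → y ∈ S → v ∈ G.ends y → x = y :=
      fun x y h1 h2 h3 h4 => hS.eq_at h1 h2 h3 h4
    have hTu : ∀ x y, x ∈ T → v ∈ G.ends x → y ∈ T → v ∈ G.ends y → x = y :=
      fun x y h1 h2 h3 h4 => hT.eq_at h1 h2 h3 h4
    rcases hall a hva with hA|hA <;> rcases hall b hvb with hB|hB <;>
      rcases hall c hvc with hC|hC
    · exact hab (hSu a b hA hva hB hvb)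
    · exact hab (hSu a b hA hva hB hvb)
    · exact hac (hSu a c hA hva hC hvc)
    · exact hbc (hTu b c hB hvb hC hvc)
    · exact hbc (hSu b c hB hvb hC hvc)
    · exact hac (hTu a c hA hva hC hvc)
    · exact hab (hTu a b hA hva hB hvb)
    · exact hab (hTu a b hA hva hB hvb)
  obtain ⟨f, hf, hfv⟩ := hex
  refine ⟨f, ⟨hf, hfv⟩, ?_⟩
  rintro g ⟨⟨hgS, hgT⟩, hgv⟩
  by_contra hne
  have hgs : g ≠ s := fun h => hgS (h ▸ hsS)
  have hgt : g ≠ t := fun h => hgT (h ▸ htT)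
  have hfs : f ≠ s := fun h => hf.1 (h ▸ hsS)
  have hft : f ≠ t := fun h => hf.2 (h ▸ htT)
  exact pigeon4 ((hat g).1 hgv) ((hat f).1 hfv) ((hat s).1 hsv) ((hat t).1 htv)
    hne hgs hgt hfs hft hst

/-- Two disjoint one-factors extend to a proper coloring. -/
lemma coloring_of_disjoint {S T : Set E} (hS : OneFactor G S) (hT : OneFactor G T)
    (hd : S ∩ T = ∅) :
    ∃ κ, Proper G κ ∧ (∀ f, f ∈ S ↔ κ f = 0) ∧ (∀ f, f ∈ T ↔ κ f = 1) := by
  classical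
  have hdis : ∀ x, x ∈ S → x ∈ T → False := by
    intro x h1 h2; have : x ∈ S ∩ T := ⟨h1, h2⟩; rw [hd] at this; exact this
  have hC := compl_oneFactor hS hT hd
  refine ⟨fun f => if f ∈ S then 0 else if f ∈ T then 1 else 2, ?_, ?_, ?_⟩
  · intro f g hne hsh
    obtain ⟨w, hw⟩ := hsh
    have hwf : w ∈ G.ends f := (Finset.mem_inter.1 hw).1
    have hwg : w ∈ G.ends g := (Finset.mem_inter.1 hw).2
    by_cases h1 : f ∈ S
    · by_cases h2 : g ∈ S
      · exact absurd (hS.eq_at h1 hwf h2 hwg) hne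
      · simp only [h1, h2, if_pos, if_neg, if_false]
        split_ifs <;> simp_all
    · by_cases h3 : f ∈ T
      · by_cases h4 : g ∈ T
        · exact absurd (hT.eq_at h3 hwf h4 hwg) hne
        · simp only [h1, h3, h4, if_pos, if_neg, if_false]
          split_ifs <;> simp_all
      · by_cases h2 : g ∈ S
        · simp only [h1, h2, h3, if_pos, if_neg]
          split_ifs <;> simp_all
        · by_cases h4 : g ∈ T
          · simp only [h1, h2, h3, h4, if_pos, if_neg]
            split_ifs <;> simp_all
          · exact absurd (hC.eq_at ⟨h1, h3⟩ hwf ⟨h2, h4⟩ hwg) hne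
  · intro f
    constructor
    · intro h; simp [h]
    · intro h
      by_contra hfS
      simp only [hfS, if_neg, if_false] at h
      split_ifs at h <;> simp_all
  · intro f
    constructor
    · intro h
      have hfS : f ∉ S := fun h' => hdis f h' h
      simp [hfS, h]
    · intro h
      by_cases h1 : f ∈ S
      · simp [h1] at h
      · by_cases h2 : f ∈ T
        · exact h2
        · simp [h1, h2] at h

end CTwork
namespace CTwork

variable {V E : Type*} [DecidableEq V]

/-! ### Translation between `IsColoring` of the line graph and proper colorings -/

lemma isColoring_iff {W : Type*} {Y : SimpleGraph W} {c : Fin 3 → Set W} :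
    IsColoring 3 Y c ↔
      ∃ κ : W → Fin 3, (∀ a b, Y.Adj a b → κ a ≠ κ b) ∧ ∀ i, c i = {w | κ w = i} := by
  constructor
  · rintro ⟨hu, hind⟩
    choose κ hκ huniq using hu
    have hci : ∀ i, c i = {w | κ w = i} := by
      intro i
      ext w
      constructor
      · intro hw; exact (huniq w i hw).symm
      · intro hw; exact hw ▸ hκ w
    refine ⟨κ, ?_, hci⟩
    intro a b hadj heq
    exact hind (κ a) a (hκ a) b (by rw [hci]; exact heq.symm) hadj
  · rintro ⟨κ, hp, hc⟩
    constructor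
    · intro w
      refine ⟨κ w, by show w ∈ c (κ w); rw [hc]; rfl, fun y hy => ?_⟩
      have hy' : w ∈ c y := hy
      rw [hc] at hy'; exact hy'.symm
    · intro i u hu w hw hadj
      rw [hc] at hu hw
      exact hp u w hadj (hu.trans hw.symm)

lemma proper_iff {G : CubicGraph V E} {κ : E → Fin 3} :
    Proper G κ ↔ ∀ a b, (lineGraph G).Adj a b → κ a ≠ κ b := by
  constructor
  · intro h a b hadj; exact h hadj.1 hadj.2
  · intro h f g hne hsh; exact h f g ⟨hne, hsh⟩

lemma isColorClass_iff_aux {G : CubicGraph V E} {S : Set E} :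
    IsColorClass 3 (lineGraph G) S ↔
      ∃ κ, Proper G κ ∧ ∃ i, S = {f | κ f = i} := by
  constructor
  · rintro ⟨c, hc, i, rfl⟩
    obtain ⟨κ, hp, hci⟩ := isColoring_iff.1 hc
    exact ⟨κ, proper_iff.2 hp, i, hci i⟩
  · rintro ⟨κ, hp, i, rfl⟩
    exact ⟨fun j => {f | κ f = j}, isColoring_iff.2 ⟨κ, proper_iff.1 hp, fun _ => rfl⟩, i, rfl⟩

lemma oneFactor_of_isColorClass {G : CubicGraph V E} {S : Set E}
    (h : IsColorClass 3 (lineGraph G) S) : OneFactor G S := by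
  obtain ⟨κ, hp, i, rfl⟩ := isColorClass_iff_aux.1 h
  exact hp.oneFactor i

/-! ### Leaf data -/

/-- Data of a leaf `v` in a cubic tree: its unique full edge `e` going to `u`,
and the two half-edges `h₁`, `h₂` at `v`. -/
structure LeafData (G : CubicGraph V E) (v u : V) (e h₁ h₂ : E) : Prop where
  hvu : v ≠ u
  he : G.ends e = {v, u}
  hh₁ : G.ends h₁ = {v}
  hh₂ : G.ends h₂ = {v}
  hne : h₁ ≠ h₂
  hat : ∀ f, v ∈ G.ends f ↔ f = e ∨ f = h₁ ∨ f = h₂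

namespace LeafData

variable {G : CubicGraph V E} {v u : V} {e h₁ h₂ : E}

lemma eh₁ (L : LeafData G v u e h₁ h₂) : e ≠ h₁ := by
  intro h; have := L.he; rw [h, L.hh₁] at this
  have : u ∈ ({v} : Finset V) := this ▸ (Finset.mem_insert_of_mem (Finset.mem_singleton_self u))
  exact L.hvu (Finset.mem_singleton.1 this).symm

lemma eh₂ (L : LeafData G v u e h₁ h₂) : e ≠ h₂ := by
  intro h; have := L.he; rw [h, L.hh₂] at this
  have : u ∈ ({v} : Finset V) := this ▸ (Finset.mem_insert_of_mem (Finset.mem_singleton_self u))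
  exact L.hvu (Finset.mem_singleton.1 this).symm

lemma ve (L : LeafData G v u e h₁ h₂) : v ∈ G.ends e := L.he ▸ Finset.mem_insert_self v {u}
lemma ue (L : LeafData G v u e h₁ h₂) : u ∈ G.ends e := L.he ▸ Finset.mem_insert_of_mem (Finset.mem_singleton_self u)
lemma vh₁ (L : LeafData G v u e h₁ h₂) : v ∈ G.ends h₁ := L.hh₁ ▸ Finset.mem_singleton_self v
lemma vh₂ (L : LeafData G v u e h₁ h₂) : v ∈ G.ends h₂ := L.hh₂ ▸ Finset.mem_singleton_self v

lemma mem_ends_h₁ (L : LeafData G v u e h₁ h₂) {w : V} (h : w ∈ G.ends h₁) : w = v := by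
  rw [L.hh₁] at h; exact Finset.mem_singleton.1 h
lemma mem_ends_h₂ (L : LeafData G v u e h₁ h₂) {w : V} (h : w ∈ G.ends h₂) : w = v := by
  rw [L.hh₂] at h; exact Finset.mem_singleton.1 h
lemma mem_ends_e (L : LeafData G v u e h₁ h₂) {w : V} (h : w ∈ G.ends e) : w = v ∨ w = u := by
  rw [L.he] at h; simpa using h

/-- Swapping the two half-edges. -/
lemma swap (L : LeafData G v u e h₁ h₂) : LeafData G v u e h₂ h₁ :=
  ⟨L.hvu, L.he, L.hh₂, L.hh₁, L.hne.symm, fun f => (L.hat f).trans (by tauto)⟩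

/-- An unordered version of being `{h₁, h₂}`. -/
def IsPair (_ : LeafData G v u e h₁ h₂) (h h' : E) : Prop :=
  (h = h₁ ∧ h' = h₂) ∨ (h = h₂ ∧ h' = h₁)

lemma pair₁₂ (L : LeafData G v u e h₁ h₂) : L.IsPair h₁ h₂ := Or.inl ⟨rfl, rfl⟩
lemma pair₂₁ (L : LeafData G v u e h₁ h₂) : L.IsPair h₂ h₁ := Or.inr ⟨rfl, rfl⟩

variable {h h' : E} {L : LeafData G v u e h₁ h₂}

lemma IsPair.symm (hp : L.IsPair h h') : L.IsPair h' h := by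
  rcases hp with ⟨rfl, rfl⟩ | ⟨rfl, rfl⟩
  · exact L.pair₂₁
  · exact L.pair₁₂

lemma IsPair.ends_h (hp : L.IsPair h h') : G.ends h = {v} := by
  rcases hp with ⟨rfl, -⟩ | ⟨rfl, -⟩
  exacts [L.hh₁, L.hh₂]

lemma IsPair.vh (hp : L.IsPair h h') : v ∈ G.ends h := hp.ends_h ▸ Finset.mem_singleton_self v

lemma IsPair.mem_ends (hp : L.IsPair h h') {w : V} (hw : w ∈ G.ends h) : w = v := by
  rw [hp.ends_h] at hw; exact Finset.mem_singleton.1 hw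

lemma IsPair.ne (hp : L.IsPair h h') : h ≠ h' := by
  rcases hp with ⟨rfl, rfl⟩ | ⟨rfl, rfl⟩
  exacts [L.hne, L.hne.symm]

lemma IsPair.eh (hp : L.IsPair h h') : e ≠ h := by
  rcases hp with ⟨rfl, -⟩ | ⟨rfl, -⟩
  exacts [L.eh₁, L.eh₂]

lemma IsPair.hat' (hp : L.IsPair h h') : ∀ f, v ∈ G.ends f ↔ f = e ∨ f = h ∨ f = h' := by
  intro f
  rcases hp with ⟨rfl, rfl⟩ | ⟨rfl, rfl⟩
  · exact L.hat f
  · exact (L.hat f).trans (by tauto)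

lemma IsPair.not_half (hp : L.IsPair h h') {f : E} (hf1 : f ≠ h₁) (hf2 : f ≠ h₂) : f ≠ h := by
  rcases hp with ⟨rfl, -⟩ | ⟨rfl, -⟩
  exacts [hf1, hf2]

end LeafData

end CTwork
namespace CTwork

variable {V E : Type*} [DecidableEq V]
variable {G : CubicGraph V E} {v u : V} {e h₁ h₂ : E}

/-! ### Contracting a leaf -/

lemma LeafData.eq_e_of_mem (L : LeafData G v u e h₁ h₂) {f : E}
    (hf : v ∈ G.ends f) (h1 : f ≠ h₁) (h2 : f ≠ h₂) : f = e := by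
  rcases (L.hat f).1 hf with h|h|h
  · exact h
  · exact absurd h h1
  · exact absurd h h2

/-- The cubic graph obtained by deleting a leaf `v` and its two half-edges;
the tree edge `e` becomes a half-edge at `u`. -/
def contract (L : LeafData G v u e h₁ h₂) :
    CubicGraph {x : V // x ≠ v} {f : E // f ≠ h₁ ∧ f ≠ h₂} where
  ends f := (G.ends f.1).subtype (· ≠ v)
  ends_card := by
    intro f
    have hcard : ((G.ends f.1).subtype (· ≠ v)).card = ((G.ends f.1).erase v).card := by
      rw [Finset.card_subtype, Finset.filter_ne']
    by_cases hv : v ∈ G.ends f.1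
    · have hfe : f.1 = e := L.eq_e_of_mem hv f.2.1 f.2.2
      left
      rw [hcard, hfe, L.he]
      rw [Finset.card_erase_of_mem (by simp), Finset.card_insert_of_notMem (by simp [L.hvu]),
        Finset.card_singleton]
    · rw [hcard, Finset.erase_eq_of_notMem hv]
      exact G.ends_card f.1
  no_parallel := by
    intro f g hf2 hfg
    have hveq : ∀ (x : {f : E // f ≠ h₁ ∧ f ≠ h₂}), ((G.ends x.1).subtype (· ≠ v)).card = 2 →
        v ∉ G.ends x.1 := by
      intro x hx hv
      have hfe : x.1 = e := L.eq_e_of_mem hv x.2.1 x.2.2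
      rw [Finset.card_subtype, Finset.filter_ne', hfe, L.he,
        Finset.card_erase_of_mem (by simp)] at hx
      have : ({v, u} : Finset V).card = 2 := by
        rw [Finset.card_insert_of_notMem (by simp [L.hvu]), Finset.card_singleton]
      omega
    have hfg' : (G.ends f.1).subtype (· ≠ v) = (G.ends g.1).subtype (· ≠ v) := hfg
    have hvf : v ∉ G.ends f.1 := hveq f hf2
    have hvg : v ∉ G.ends g.1 := hveq g (hfg' ▸ hf2)
    have hends : G.ends f.1 = G.ends g.1 := by
      ext x
      by_cases hx : x = v
      · subst hx; simp [hvf, hvg]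
      · have := Finset.ext_iff.1 hfg' ⟨x, hx⟩
        simpa [Finset.mem_subtype] using this
    have hcard : (G.ends f.1).card = 2 := by
      rw [Finset.card_subtype, Finset.filter_ne', Finset.erase_eq_of_notMem hvf] at hf2
      exact hf2
    exact Subtype.ext (G.no_parallel f.1 g.1 hcard hends)
  cubic := by
    intro w
    obtain ⟨a, b, c, hab, hac, hbc, hat⟩ := G.cubic w.1
    have hmem : ∀ {x : E}, w.1 ∈ G.ends x → x ≠ h₁ ∧ x ≠ h₂ := by
      intro x hx
      constructor
      · rintro rfl; exact w.2 (L.mem_ends_h₁ hx)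
      · rintro rfl; exact w.2 (L.mem_ends_h₂ hx)
    have hwa := (hat a).2 (Or.inl rfl)
    have hwb := (hat b).2 (Or.inr (Or.inl rfl))
    have hwc := (hat c).2 (Or.inr (Or.inr rfl))
    refine ⟨⟨a, hmem hwa⟩, ⟨b, hmem hwb⟩, ⟨c, hmem hwc⟩,
      fun h => hab (Subtype.ext_iff.1 h), fun h => hac (Subtype.ext_iff.1 h),
      fun h => hbc (Subtype.ext_iff.1 h), ?_⟩
    intro f
    rw [Finset.mem_subtype]
    rw [hat f.1]
    constructor
    · rintro (h|h|h)
      · exact Or.inl (Subtype.ext h)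
      · exact Or.inr (Or.inl (Subtype.ext h))
      · exact Or.inr (Or.inr (Subtype.ext h))
    · rintro (h|h|h) <;> rw [h]
      · exact Or.inl rfl
      · exact Or.inr (Or.inl rfl)
      · exact Or.inr (Or.inr rfl)

lemma mem_ends_contract (L : LeafData G v u e h₁ h₂) {w : {x : V // x ≠ v}}
    {f : {f : E // f ≠ h₁ ∧ f ≠ h₂}} : w ∈ (contract L).ends f ↔ w.1 ∈ G.ends f.1 :=
  Finset.mem_subtype

/-- The tree edge `e` viewed as an edge of the contraction. -/
def LeafData.e' (L : LeafData G v u e h₁ h₂) : {f : E // f ≠ h₁ ∧ f ≠ h₂} :=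
  ⟨e, fun h => L.eh₁ h, fun h => L.eh₂ h⟩

/-- `v`'s neighbour `u` viewed as a vertex of the contraction. -/
def LeafData.u' (L : LeafData G v u e h₁ h₂) : {x : V // x ≠ v} :=
  ⟨u, fun h => L.hvu h.symm⟩

lemma contract_ends_e' (L : LeafData G v u e h₁ h₂) :
    (contract L).ends L.e' = {L.u'} := by
  ext w
  rw [mem_ends_contract]
  show w.1 ∈ G.ends e ↔ _
  rw [L.he]
  constructor
  · intro hw
    rcases Finset.mem_insert.1 hw with h|h
    · exact absurd h w.2
    · exact Finset.mem_singleton.2 (Subtype.ext (Finset.mem_singleton.1 h))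
  · intro hw
    rw [Finset.mem_singleton.1 hw]
    exact Finset.mem_insert_of_mem (Finset.mem_singleton_self u)

lemma contract_e'_half (L : LeafData G v u e h₁ h₂) :
    ((contract L).ends L.e').card = 1 := by rw [contract_ends_e']; simp

/-! ### Lifting and projecting edge sets -/

/-- Lift a set of edges of the contraction to a set of edges. -/
def Elift (T : Set {f : E // f ≠ h₁ ∧ f ≠ h₂}) : Set E := Subtype.val '' T

lemma mem_Elift {T : Set {f : E // f ≠ h₁ ∧ f ≠ h₂}} {x : E} :
    x ∈ Elift T ↔ ∃ hx : x ≠ h₁ ∧ x ≠ h₂, ⟨x, hx⟩ ∈ T := by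
  constructor
  · rintro ⟨⟨y, hy⟩, hyT, rfl⟩; exact ⟨hy, hyT⟩
  · rintro ⟨hx, hT⟩; exact ⟨⟨x, hx⟩, hT, rfl⟩

lemma mem_Elift' {T : Set {f : E // f ≠ h₁ ∧ f ≠ h₂}} (f : {f : E // f ≠ h₁ ∧ f ≠ h₂}) :
    f.1 ∈ Elift T ↔ f ∈ T := by
  rw [mem_Elift]
  exact ⟨fun ⟨hx, hT⟩ => hT, fun h => ⟨f.2, h⟩⟩

lemma not_mem_Elift_left {T : Set {f : E // f ≠ h₁ ∧ f ≠ h₂}} : h₁ ∉ Elift T := by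
  rw [mem_Elift]; rintro ⟨⟨h, -⟩, -⟩; exact h rfl

lemma not_mem_Elift_right {T : Set {f : E // f ≠ h₁ ∧ f ≠ h₂}} : h₂ ∉ Elift T := by
  rw [mem_Elift]; rintro ⟨⟨-, h⟩, -⟩; exact h rfl

lemma not_mem_Elift_pair {L : LeafData G v u e h₁ h₂} {h h' : E} (hp : L.IsPair h h')
    {T : Set {f : E // f ≠ h₁ ∧ f ≠ h₂}} : h ∉ Elift T := by
  rcases hp with ⟨rfl, -⟩ | ⟨rfl, -⟩
  exacts [not_mem_Elift_left, not_mem_Elift_right]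

lemma Elift_inter {T T' : Set {f : E // f ≠ h₁ ∧ f ≠ h₂}} (h : T ∩ T' = ∅) :
    Elift T ∩ Elift T' = ∅ := by
  ext x
  simp only [Set.mem_inter_iff, mem_Elift, Set.mem_empty_iff_false, iff_false]
  rintro ⟨⟨hx, hT⟩, ⟨hx', hT'⟩⟩
  have : (⟨x, hx⟩ : {f : E // f ≠ h₁ ∧ f ≠ h₂}) ∈ T ∩ T' := ⟨hT, hT'⟩
  rw [h] at this; exact this

lemma proj_Elift {T : Set {f : E // f ≠ h₁ ∧ f ≠ h₂}} :
    Subtype.val ⁻¹' (Elift T) = T :=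
  Set.preimage_image_eq T Subtype.val_injective

/-- Exactly one of `e`, `h₁`, `h₂` belongs to a one-factor. -/
lemma OneFactor.vEdge (L : LeafData G v u e h₁ h₂) {S : Set E} (hS : OneFactor G S) :
    (e ∈ S ∧ h₁ ∉ S ∧ h₂ ∉ S) ∨ (h₁ ∈ S ∧ e ∉ S ∧ h₂ ∉ S) ∨ (h₂ ∈ S ∧ e ∉ S ∧ h₁ ∉ S) := by
  obtain ⟨f, ⟨hfS, hfv⟩, -⟩ := hS v
  have huniq : ∀ g, g ∈ S → v ∈ G.ends g → g = f := fun g h1 h2 => hS.eq_at h1 h2 hfS hfv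
  rcases (L.hat f).1 hfv with rfl|rfl|rfl
  · refine Or.inl ⟨hfS, fun h => L.eh₁ (huniq h₁ h L.vh₁).symm,
      fun h => L.eh₂ (huniq h₂ h L.vh₂).symm⟩
  · refine Or.inr (Or.inl ⟨hfS, fun h => L.eh₁ (huniq e h L.ve), fun h => L.hne (huniq h₂ h L.vh₂).symm⟩)
  · refine Or.inr (Or.inr ⟨hfS, fun h => L.eh₂ (huniq e h L.ve), fun h => L.hne (huniq h₁ h L.vh₁)⟩)

lemma OneFactor.proj (L : LeafData G v u e h₁ h₂) {S : Set E} (hS : OneFactor G S) :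
    OneFactor (contract L) (Subtype.val ⁻¹' S) := by
  intro w
  obtain ⟨f, ⟨hfS, hfv⟩, -⟩ := hS w.1
  have hf1 : f ≠ h₁ := fun h => w.2 (L.mem_ends_h₁ (h ▸ hfv))
  have hf2 : f ≠ h₂ := fun h => w.2 (L.mem_ends_h₂ (h ▸ hfv))
  refine ⟨⟨f, hf1, hf2⟩, ⟨hfS, (mem_ends_contract L).2 hfv⟩, ?_⟩
  rintro ⟨g, hg⟩ ⟨hgS, hgv⟩
  exact Subtype.ext (hS.eq_at hgS ((mem_ends_contract L).1 hgv) hfS hfv)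

lemma oneFactor_lift_e (L : LeafData G v u e h₁ h₂) {T : Set {f : E // f ≠ h₁ ∧ f ≠ h₂}}
    (hT : OneFactor (contract L) T) (he' : L.e' ∈ T) : OneFactor G (Elift T) := by
  intro w
  by_cases hw : w = v
  · subst hw
    refine ⟨e, ⟨(mem_Elift' L.e').2 he', L.ve⟩, ?_⟩
    rintro g ⟨hgT, hgv⟩
    obtain ⟨hg, -⟩ := mem_Elift.1 hgT
    exact L.eq_e_of_mem hgv hg.1 hg.2
  · obtain ⟨f, ⟨hfT, hfw⟩, huniq⟩ := hT ⟨w, hw⟩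
    refine ⟨f.1, ⟨(mem_Elift' f).2 hfT, (mem_ends_contract L).1 hfw⟩, ?_⟩
    rintro g ⟨hgT, hgv⟩
    obtain ⟨hg, hgT'⟩ := mem_Elift.1 hgT
    exact Subtype.ext_iff.1 (huniq ⟨g, hg⟩ ⟨hgT', (mem_ends_contract L).2 hgv⟩)

lemma oneFactor_lift_h (L : LeafData G v u e h₁ h₂) {h h' : E} (hp : L.IsPair h h')
    {T : Set {f : E // f ≠ h₁ ∧ f ≠ h₂}} (hT : OneFactor (contract L) T) (he' : L.e' ∉ T) :
    OneFactor G (Elift T ∪ {h}) := by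
  intro w
  by_cases hw : w = v
  · subst hw
    refine ⟨h, ⟨Or.inr rfl, hp.vh⟩, ?_⟩
    rintro g ⟨hgT | hgh, hgv⟩
    · obtain ⟨hg, hgT'⟩ := mem_Elift.1 hgT
      have : g = e := L.eq_e_of_mem hgv hg.1 hg.2
      subst this
      exact absurd hgT' (by
        intro hmem
        exact he' (by
          have : (⟨g, hg⟩ : {f : E // f ≠ h₁ ∧ f ≠ h₂}) = L.e' := Subtype.ext rfl
          rwa [this] at hmem))
    · exact hgh
  · obtain ⟨f, ⟨hfT, hfw⟩, huniq⟩ := hT ⟨w, hw⟩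
    refine ⟨f.1, ⟨Or.inl ((mem_Elift' f).2 hfT), (mem_ends_contract L).1 hfw⟩, ?_⟩
    rintro g ⟨hgT | hgh, hgv⟩
    · obtain ⟨hg, hgT'⟩ := mem_Elift.1 hgT
      exact Subtype.ext_iff.1 (huniq ⟨g, hg⟩ ⟨hgT', (mem_ends_contract L).2 hgv⟩)
    · rw [Set.mem_singleton_iff] at hgh
      subst hgh
      exact absurd (hp.mem_ends hgv) hw

lemma lift_proj_eq (L : LeafData G v u e h₁ h₂) {S : Set E}
    (h1 : h₁ ∉ S) (h2 : h₂ ∉ S) :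
    Elift ((Subtype.val : {f : E // f ≠ h₁ ∧ f ≠ h₂} → E) ⁻¹' S) = S := by
  ext x
  rw [mem_Elift]
  constructor
  · rintro ⟨hx, hS⟩; exact hS
  · intro hx
    have hx1 : x ≠ h₁ := fun h => h1 (h ▸ hx)
    have hx2 : x ≠ h₂ := fun h => h2 (h ▸ hx)
    exact ⟨⟨hx1, hx2⟩, hx⟩

lemma lift_proj_union (L : LeafData G v u e h₁ h₂) {S : Set E} {h h' : E} (hp : L.IsPair h h')
    (hh : h ∈ S) (hh' : h' ∉ S) :
    Elift ((Subtype.val : {f : E // f ≠ h₁ ∧ f ≠ h₂} → E) ⁻¹' S) ∪ {h} = S := by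
  ext x
  simp only [Set.mem_union, mem_Elift, Set.mem_singleton_iff]
  constructor
  · rintro (⟨hx, hS⟩ | rfl)
    · exact hS
    · exact hh
  · intro hx
    by_cases hxh : x = h
    · exact Or.inr hxh
    · have hxh' : x ≠ h' := fun hq => hh' (hq ▸ hx)
      rcases hp with ⟨rfl, rfl⟩ | ⟨rfl, rfl⟩
      · exact Or.inl ⟨⟨hxh, hxh'⟩, hx⟩
      · exact Or.inl ⟨⟨hxh', hxh⟩, hx⟩

lemma mem_lift_e' {T : Set {f : E // f ≠ h₁ ∧ f ≠ h₂}} (L : LeafData G v u e h₁ h₂) :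
    e ∈ Elift T ↔ L.e' ∈ T := mem_Elift' L.e'

end CTwork
namespace CTwork

variable {V E : Type*} [DecidableEq V]
variable {G : CubicGraph V E} {v u : V} {e h₁ h₂ : E}

/-! ### Tree facts: leaf existence and tree-ness of the contraction -/

lemma adj_v_iff (L : LeafData G v u e h₁ h₂) {y : V} :
    (underlying G).Adj v y ↔ y = u := by
  constructor
  · rintro ⟨hvy, f, hf⟩
    have hvf : v ∈ G.ends f := hf ▸ Finset.mem_insert_self v {y}
    have hyf : y ∈ G.ends f := hf ▸ Finset.mem_insert_of_mem (Finset.mem_singleton_self y)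
    rcases (L.hat f).1 hvf with h|h|h
    · rw [h] at hf
      have : u ∈ ({v, y} : Finset V) := hf ▸ L.ue
      rcases Finset.mem_insert.1 this with h'|h'
      · exact absurd h'.symm L.hvu
      · exact (Finset.mem_singleton.1 h').symm
    · rw [h] at hyf
      exact absurd (L.mem_ends_h₁ hyf).symm hvy
    · rw [h] at hyf
      exact absurd (L.mem_ends_h₂ hyf).symm hvy
  · rintro rfl
    exact ⟨L.hvu, e, L.he⟩

lemma exists_leaf [Fintype V] (G : CubicGraph V E) (htree : (underlying G).IsTree)
    (h2 : 2 ≤ Fintype.card V) : ∃ v u e h₁ h₂, LeafData G v u e h₁ h₂ := by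
  classical
  set T := underlying G with hT
  -- find a vertex of degree ≤ 1
  have hdeg : ∃ v, T.degree v ≤ 1 := by
    by_contra hno
    push_neg at hno
    have hsum : 2 * Fintype.card V ≤ ∑ w : V, T.degree w := by
      calc 2 * Fintype.card V = ∑ _w : V, 2 := by
            rw [Finset.sum_const, Finset.card_univ, smul_eq_mul, mul_comm]
        _ ≤ ∑ w : V, T.degree w := Finset.sum_le_sum fun w _ => hno w
    rw [T.sum_degrees_eq_twice_card_edges, ← htree.card_edgeFinset] at hsum
    omega
  obtain ⟨v, hv⟩ := hdeg
  -- at most one full edge at `v`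
  have honefull : ∀ f g, v ∈ G.ends f → v ∈ G.ends g → f ≠ g →
      (G.ends f).card = 2 → (G.ends g).card = 2 → False := by
    intro f g hvf hvg hfg hf2 hg2
    have hshape : ∀ x, v ∈ G.ends x → (G.ends x).card = 2 →
        ∃ y, y ≠ v ∧ G.ends x = {v, y} := by
      intro x hvx hx2
      obtain ⟨p, q, hpq, hx⟩ := Finset.card_eq_two.1 hx2
      rw [hx] at hvx
      rcases Finset.mem_insert.1 hvx with rfl|hq
      · exact ⟨q, hpq.symm, hx⟩
      · rw [← Finset.mem_singleton.1 hq] at hx hpq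
        exact ⟨p, hpq, by rw [hx, Finset.pair_comm]⟩
    obtain ⟨yf, hyfv, hyf⟩ := hshape f hvf hf2
    obtain ⟨yg, hygv, hyg⟩ := hshape g hvg hg2
    have hyfyg : yf ≠ yg := by
      rintro rfl
      exact hfg (G.no_parallel f g hf2 (hyf.trans hyg.symm))
    have hadjf : T.Adj v yf := ⟨hyfv.symm, f, hyf⟩
    have hadjg : T.Adj v yg := ⟨hygv.symm, g, hyg⟩
    have hsub : ({yf, yg} : Finset V) ⊆ T.neighborFinset v := by
      intro z hz
      rcases Finset.mem_insert.1 hz with rfl|hz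
      · exact (T.mem_neighborFinset v z).2 hadjf
      · rw [Finset.mem_singleton.1 hz]
        exact (T.mem_neighborFinset v yg).2 hadjg
    have : 2 ≤ T.degree v := by
      calc 2 = ({yf, yg} : Finset V).card := by
            rw [Finset.card_insert_of_notMem (by simp [hyfyg]), Finset.card_singleton]
        _ ≤ _ := Finset.card_le_card hsub
    omega
  -- v has a neighbour
  have hnbr : ∃ b, T.Adj v b := by
    obtain ⟨w, hw⟩ := Fintype.exists_ne_of_one_lt_card (by omega) v
    obtain ⟨p⟩ := htree.isConnected.preconnected v w
    cases p with
    | nil => exact absurd rfl hw.symm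
    | cons h q => exact ⟨_, h⟩
  obtain ⟨b, hb⟩ := hnbr
  -- the edge to b is full
  obtain ⟨hvb, f₀, hf₀⟩ := hb
  have hf₀v : v ∈ G.ends f₀ := hf₀ ▸ Finset.mem_insert_self v {b}
  have hf₀2 : (G.ends f₀).card = 2 := by
    rw [hf₀, Finset.card_insert_of_notMem (by simp [hvb]), Finset.card_singleton]
  obtain ⟨a₁, a₂, a₃, h12, h13, h23, hat⟩ := G.cubic v
  have hva₁ : v ∈ G.ends a₁ := (hat a₁).2 (Or.inl rfl)
  have hva₂ : v ∈ G.ends a₂ := (hat a₂).2 (Or.inr (Or.inl rfl))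
  have hva₃ : v ∈ G.ends a₃ := (hat a₃).2 (Or.inr (Or.inr rfl))
  have hhalf : ∀ x, v ∈ G.ends x → (G.ends x).card = 1 → G.ends x = {v} := by
    intro x hvx hx1
    obtain ⟨y, hy⟩ := Finset.card_eq_one.1 hx1
    rw [hy] at hvx ⊢
    rw [Finset.mem_singleton.1 hvx]
  -- the full edge among a₁ a₂ a₃
  have key : ∀ x y z : E, v ∈ G.ends x → v ∈ G.ends y → v ∈ G.ends z →
      x ≠ y → x ≠ z → y ≠ z → (∀ f, v ∈ G.ends f ↔ f = x ∨ f = y ∨ f = z) →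
      (G.ends x).card = 2 →
      ∃ v' u' e' h₁' h₂', LeafData G v' u' e' h₁' h₂' := by
    intro x y z hvx hvy hvz hxy hxz hyz hat' hx2
    have hy1 : (G.ends y).card = 1 := by
      rcases G.ends_card y with h|h
      · exact h
      · exact absurd (honefull x y hvx hvy hxy hx2 h) not_false
    have hz1 : (G.ends z).card = 1 := by
      rcases G.ends_card z with h|h
      · exact h
      · exact absurd (honefull x z hvx hvz hxz hx2 h) not_false
    obtain ⟨w, hwv, hw⟩ : ∃ w, w ≠ v ∧ G.ends x = {v, w} := by
      obtain ⟨p, q, hpq, hx⟩ := Finset.card_eq_two.1 hx2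
      rw [hx] at hvx
      rcases Finset.mem_insert.1 hvx with rfl|hq
      · exact ⟨q, hpq.symm, hx⟩
      · rw [← Finset.mem_singleton.1 hq] at hx hpq
        exact ⟨p, hpq, by rw [hx, Finset.pair_comm]⟩
    exact ⟨v, w, x, y, z, ⟨hwv.symm, hw, hhalf y hvy hy1, hhalf z hvz hz1, hyz, hat'⟩⟩
  -- f₀ is one of a₁ a₂ a₃
  rcases (hat f₀).1 hf₀v with rfl|rfl|rfl
  · exact key f₀ a₂ a₃ hf₀v hva₂ hva₃ h12 h13 h23 hat hf₀2
  · exact key f₀ a₁ a₃ hf₀v hva₁ hva₃ (Ne.symm h12) h23 h13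
      (fun f => (hat f).trans (by tauto)) hf₀2
  · exact key f₀ a₁ a₂ hf₀v hva₁ hva₂ (Ne.symm h13) (Ne.symm h23) h12
      (fun f => (hat f).trans (by tauto)) hf₀2

lemma adj_contract (L : LeafData G v u e h₁ h₂) {a b : {x : V // x ≠ v}} :
    (underlying (contract L)).Adj a b ↔ (underlying G).Adj a.1 b.1 := by
  constructor
  · rintro ⟨hne, f, hf⟩
    have hne' : a.1 ≠ b.1 := fun h => hne (Subtype.ext h)
    have hvnot : v ∉ G.ends f.1 := by
      intro hv
      have hfe : f.1 = e := L.eq_e_of_mem hv f.2.1 f.2.2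
      have hfe' : f = L.e' := Subtype.ext hfe
      rw [hfe', contract_ends_e'] at hf
      have : a ∈ ({L.u'} : Finset _) := hf ▸ Finset.mem_insert_self a {b}
      have hb : b ∈ ({L.u'} : Finset _) := hf ▸ Finset.mem_insert_of_mem (Finset.mem_singleton_self b)
      rw [Finset.mem_singleton] at this hb
      exact hne (this.trans hb.symm)
    refine ⟨hne', f.1, ?_⟩
    ext x
    constructor
    · intro hx
      have hxv : x ≠ v := fun h => hvnot (h ▸ hx)
      have : (⟨x, hxv⟩ : {x : V // x ≠ v}) ∈ (contract L).ends f :=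
        (mem_ends_contract L).2 hx
      rw [hf] at this
      rcases Finset.mem_insert.1 this with h|h
      · exact Finset.mem_insert.2 (Or.inl (Subtype.ext_iff.1 h))
      · exact Finset.mem_insert.2 (Or.inr (by
          rw [Finset.mem_singleton] at h ⊢; exact Subtype.ext_iff.1 h))
    · intro hx
      rcases Finset.mem_insert.1 hx with rfl|h
      · have : a ∈ (contract L).ends f := hf ▸ Finset.mem_insert_self a {b}
        exact (mem_ends_contract L).1 this
      · rw [Finset.mem_singleton] at h
        subst h
        have : b ∈ (contract L).ends f := hf ▸ Finset.mem_insert_of_mem (Finset.mem_singleton_self b)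
        exact (mem_ends_contract L).1 this
  · rintro ⟨hne, f, hf⟩
    have hmem : a.1 ∈ G.ends f := hf ▸ Finset.mem_insert_self a.1 {b.1}
    have hf1 : f ≠ h₁ := by
      intro hq; rw [hq] at hmem; exact a.2 (L.mem_ends_h₁ hmem)
    have hf2 : f ≠ h₂ := by
      intro hq; rw [hq] at hmem; exact a.2 (L.mem_ends_h₂ hmem)
    refine ⟨fun h => hne (Subtype.ext_iff.1 h), ⟨f, hf1, hf2⟩, ?_⟩
    ext w
    rw [mem_ends_contract]
    show w.1 ∈ G.ends f ↔ _
    rw [hf]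
    constructor
    · intro hw
      rcases Finset.mem_insert.1 hw with h|h
      · exact Finset.mem_insert.2 (Or.inl (Subtype.ext h))
      · rw [Finset.mem_singleton] at h
        exact Finset.mem_insert.2 (Or.inr (Finset.mem_singleton.2 (Subtype.ext h)))
    · intro hw
      rcases Finset.mem_insert.1 hw with rfl|h
      · exact Finset.mem_insert_self _ _
      · rw [Finset.mem_singleton] at h
        subst h
        exact Finset.mem_insert_of_mem (Finset.mem_singleton_self _)

lemma contract_isTree (L : LeafData G v u e h₁ h₂) (htree : (underlying G).IsTree)
    (hV2 : ∃ x : V, x ≠ v) : (underlying (contract L)).IsTree := by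
  constructor
  · -- connected
    have hne : Nonempty {x : V // x ≠ v} := by
      obtain ⟨x, hx⟩ := hV2; exact ⟨⟨x, hx⟩⟩
    have key : ∀ n (x y : V) (hx : x ≠ v) (hy : y ≠ v) (p : (underlying G).Walk x y),
        p.length ≤ n → (underlying (contract L)).Reachable ⟨x, hx⟩ ⟨y, hy⟩ := by
      intro n
      induction n with
      | zero =>
        intro x y hx hy p hlen
        cases p with
        | nil => exact Reachable.refl _
        | cons h q => simp [SimpleGraph.Walk.length_cons] at hlen
      | succ n ih =>
        intro x y hx hy p hlen
        cases p with
        | nil => exact Reachable.refl _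
        | @cons _ b _ hadj q =>
          by_cases hb : b = v
          · have hadjv : (underlying G).Adj x v := by rw [← hb]; exact hadj
            have hxu : x = u := (adj_v_iff L).1 hadjv.symm
            cases q with
            | nil => exact absurd hb hy
            | @cons _ c _ hadj2 q2 =>
              have hadjv2 : (underlying G).Adj v c := by rw [← hb]; exact hadj2
              have hcu : c = u := (adj_v_iff L).1 hadjv2
              have hcv : c ≠ v := by rw [hcu]; exact fun h => L.hvu h.symm
              have hlen2 : q2.length ≤ n := by
                simp only [SimpleGraph.Walk.length_cons] at hlen
                omega
              have := ih c y hcv hy q2 hlen2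
              have hxc : x = c := hxu.trans hcu.symm
              subst hxc
              exact this
          · have hstep : (underlying (contract L)).Adj ⟨x, hx⟩ ⟨b, hb⟩ :=
              (adj_contract L).2 hadj
            have hlen2 : q.length ≤ n := by
              simp only [SimpleGraph.Walk.length_cons] at hlen
              omega
            exact (hstep.reachable).trans (ih b y hb hy q hlen2)
    constructor
    intro a b
    obtain ⟨p⟩ := htree.isConnected.preconnected a.1 b.1
    have := key p.length a.1 b.1 a.2 b.2 p le_rfl
    convert this <;> exact Subtype.ext rfl
  · -- acyclic
    intro w p hp
    let hom : underlying (contract L) →g underlying G :=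
      ⟨Subtype.val, fun hadj => (adj_contract L).1 hadj⟩
    have hinj : Function.Injective hom := fun x y h => Subtype.ext (by exact h)
    exact htree.IsAcyclic (p.map hom) (hp.map hinj)

end CTwork
namespace CTwork

variable {V E : Type*} [DecidableEq V]
variable {G : CubicGraph V E} {v u : V} {e h₁ h₂ : E}

/-! ### The five inductive statements -/

lemma ends_nonempty (G : CubicGraph V E) (f : E) : (G.ends f).Nonempty := by
  rcases G.ends_card f with h|h <;>
    exact Finset.card_pos.1 (by omega)

def P1 (G : CubicGraph V E) : Prop := ∃ κ, Proper G κ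

def P2 (G : CubicGraph V E) : Prop :=
  ∀ S : Set E, OneFactor G S → ∃ κ, Proper G κ ∧ ∀ f, f ∈ S ↔ κ f = 0

def P3 (G : CubicGraph V E) : Prop :=
  ∀ f g : E, f ≠ g → ∃ κ, Proper G κ ∧ κ f ≠ κ g

def Good (G : CubicGraph V E) (x₀ : E) (S : Set E) : Prop := OneFactor G S ∧ x₀ ∉ S

def Step (G : CubicGraph V E) (x₀ : E) (S S' : Set E) : Prop :=
  Good G x₀ S' ∧ S ∩ S' = ∅

def P4 (G : CubicGraph V E) : Prop :=
  ∀ x₀ : E, (G.ends x₀).card = 1 → ∀ S S', Good G x₀ S → Good G x₀ S' →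
    Relation.ReflTransGen (Step G x₀) S S'

def P5 (G : CubicGraph V E) : Prop :=
  ∀ cl : Set E → Fin 3,
    (∀ S T, OneFactor G S → OneFactor G T → S ≠ T → S ∩ T = ∅ → cl S ≠ cl T) →
    ∃ w : V, ∀ S T, OneFactor G S → OneFactor G T →
      (∀ x, w ∈ G.ends x → (x ∈ S ↔ x ∈ T)) → cl S = cl T

/-! ### Base case : one vertex -/

section Base

variable (hall : ∀ w : V, w = v)

lemma all_at (G : CubicGraph V E) (hall : ∀ w : V, w = v) (f : E) : v ∈ G.ends f := by
  obtain ⟨w, hw⟩ := ends_nonempty G f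
  rwa [hall w] at hw

lemma base_proper (G : CubicGraph V E) (hall : ∀ w : V, w = v) {a b c : E}
    (hab : a ≠ b) (hac : a ≠ c) (hbc : b ≠ c)
    (hat : ∀ f, v ∈ G.ends f ↔ f = a ∨ f = b ∨ f = c) :
    ∃ κ, Proper G κ ∧ (∀ f, f ∈ ({a} : Set E) ↔ κ f = 0) := by
  classical
  refine ⟨fun f => if f = a then 0 else if f = b then 1 else 2, ?_, ?_⟩
  · intro f g hne _
    have hf := (hat f).1 (all_at G hall f)
    have hg := (hat g).1 (all_at G hall g)
    rcases hf with rfl|rfl|rfl <;> rcases hg with rfl|rfl|rfl <;> (try simp_all) <;>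
      (try split_ifs) <;> simp_all [eq_comm]
  · intro f
    rcases (hat f).1 (all_at G hall f) with rfl|rfl|rfl <;> (try simp_all) <;>
      (try split_ifs) <;> simp_all

lemma base_oneFactor (G : CubicGraph V E) (hall : ∀ w : V, w = v) {S : Set E}
    (hS : OneFactor G S) : ∃ x, v ∈ G.ends x ∧ S = {x} := by
  obtain ⟨x, ⟨hxS, hxv⟩, -⟩ := hS v
  refine ⟨x, hxv, ?_⟩
  ext y
  simp only [Set.mem_singleton_iff]
  constructor
  · intro hy; exact hS.eq_at hy (all_at G hall y) hxS hxv
  · rintro rfl; exact hxS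

lemma base_case (G : CubicGraph V E) (hall : ∀ w : V, w = v) :
    P1 G ∧ P2 G ∧ P3 G ∧ P4 G ∧ P5 G := by
  obtain ⟨a, b, c, hab, hac, hbc, hat⟩ := G.cubic v
  have hP1 : P1 G := by
    obtain ⟨κ, hκ, -⟩ := base_proper G hall hab hac hbc hat
    exact ⟨κ, hκ⟩
  have hP2 : P2 G := by
    intro S hS
    obtain ⟨x, hxv, rfl⟩ := base_oneFactor G hall hS
    rcases (hat x).1 hxv with rfl|rfl|rfl
    · exact base_proper G hall hab hac hbc hat
    · exact base_proper G hall hab.symm hbc hac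
        (fun f => (hat f).trans (by tauto))
    · exact base_proper G hall hac.symm hbc.symm hab
        (fun f => (hat f).trans (by tauto))
  have hP3 : P3 G := by
    intro f g hne
    obtain ⟨κ, hκ⟩ := hP1
    exact ⟨κ, hκ, hκ hne (shares v (all_at G hall f) (all_at G hall g))⟩
  have hP4 : P4 G := by
    intro x₀ hx₀ S S' hgS hgS'
    obtain ⟨x, hxv, rfl⟩ := base_oneFactor G hall hgS.1
    obtain ⟨y, hyv, rfl⟩ := base_oneFactor G hall hgS'.1
    by_cases hxy : x = y
    · subst hxy; exact Relation.ReflTransGen.refl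
    · refine Relation.ReflTransGen.single ⟨hgS', ?_⟩
      ext z
      simp only [Set.mem_inter_iff, Set.mem_singleton_iff, Set.mem_empty_iff_false, iff_false]
      rintro ⟨rfl, h⟩
      exact hxy h
  have hP5 : P5 G := by
    intro cl hcl
    refine ⟨v, fun S T hS hT hsame => ?_⟩
    obtain ⟨x, hxv, rfl⟩ := base_oneFactor G hall hS
    obtain ⟨y, hyv, rfl⟩ := base_oneFactor G hall hT
    have : x ∈ ({y} : Set E) := (hsame x hxv).1 rfl
    rw [Set.mem_singleton_iff] at this
    subst this
    rfl
  exact ⟨hP1, hP2, hP3, hP4, hP5⟩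

end Base

/-! ### Lifted colorings -/

open Classical in
/-- Extend a proper coloring of the contraction by coloring `h₁`, `h₂` with `c₁`, `c₂`. -/
noncomputable def liftκ (L : LeafData G v u e h₁ h₂)
    (κ' : {f : E // f ≠ h₁ ∧ f ≠ h₂} → Fin 3) (c₁ c₂ : Fin 3) : E → Fin 3 :=
  fun f => if hf : f ≠ h₁ ∧ f ≠ h₂ then κ' ⟨f, hf⟩ else if f = h₁ then c₁ else c₂

variable {L : LeafData G v u e h₁ h₂} {κ' : {f : E // f ≠ h₁ ∧ f ≠ h₂} → Fin 3} {c₁ c₂ : Fin 3}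

lemma liftκ_h₁ : liftκ L κ' c₁ c₂ h₁ = c₁ := by
  rw [liftκ, dif_neg (by simp), if_pos rfl]

lemma liftκ_h₂ (hne : h₁ ≠ h₂) : liftκ L κ' c₁ c₂ h₂ = c₂ := by
  rw [liftκ, dif_neg (by simp), if_neg hne.symm]

lemma liftκ_other {f : E} (hf : f ≠ h₁ ∧ f ≠ h₂) :
    liftκ L κ' c₁ c₂ f = κ' ⟨f, hf⟩ := by
  rw [liftκ, dif_pos hf]

lemma liftκ_e' : liftκ L κ' c₁ c₂ e = κ' L.e' := liftκ_other ⟨fun h => L.eh₁ h, fun h => L.eh₂ h⟩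

lemma liftκ_proper (hκ' : Proper (contract L) κ')
    (h12 : c₁ ≠ c₂) (h1e : c₁ ≠ κ' L.e') (h2e : c₂ ≠ κ' L.e') :
    Proper G (liftκ L κ' c₁ c₂) := by
  have key : ∀ f, f ≠ h₁ → f ≠ h₂ → v ∈ G.ends f → liftκ L κ' c₁ c₂ f = κ' L.e' := by
    intro f hf1 hf2 hfv
    have : f = e := L.eq_e_of_mem hfv hf1 hf2
    subst this
    exact liftκ_e'
  intro f g hne hsh
  obtain ⟨w, hw⟩ := hsh
  have hwf : w ∈ G.ends f := (Finset.mem_inter.1 hw).1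
  have hwg : w ∈ G.ends g := (Finset.mem_inter.1 hw).2
  by_cases hf1 : f = h₁
  · subst hf1
    have hwv : w = v := L.mem_ends_h₁ hwf
    subst hwv
    rw [liftκ_h₁]
    by_cases hg2 : g = h₂
    · subst hg2; rw [liftκ_h₂ L.hne]; exact h12
    · rw [key g (Ne.symm hne) hg2 hwg]; exact h1e
  · by_cases hf2 : f = h₂
    · subst hf2
      have hwv : w = v := L.mem_ends_h₂ hwf
      subst hwv
      rw [liftκ_h₂ L.hne]
      by_cases hg1 : g = h₁
      · subst hg1; rw [liftκ_h₁]; exact h12.symm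
      · rw [key g hg1 (Ne.symm hne) hwg]; exact h2e
    · by_cases hg1 : g = h₁
      · subst hg1
        have hwv : w = v := L.mem_ends_h₁ hwg
        subst hwv
        rw [liftκ_h₁, key f hf1 hf2 hwf]
        exact h1e.symm
      · by_cases hg2 : g = h₂
        · subst hg2
          have hwv : w = v := L.mem_ends_h₂ hwg
          subst hwv
          rw [liftκ_h₂ L.hne, key f hf1 hf2 hwf]
          exact h2e.symm
        · rw [liftκ_other ⟨hf1, hf2⟩, liftκ_other ⟨hg1, hg2⟩]
          by_cases hwv : w = v
          · subst hwv
            exact absurd ((L.eq_e_of_mem hwf hf1 hf2).trans (L.eq_e_of_mem hwg hg1 hg2).symm) hne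
          · refine hκ' (fun h => hne (Subtype.ext_iff.1 h)) ⟨⟨w, hwv⟩, ?_⟩
            rw [Finset.mem_inter, mem_ends_contract, mem_ends_contract]
            exact ⟨hwf, hwg⟩

lemma fin3_add_facts (x : Fin 3) : x + 1 ≠ x ∧ x + 2 ≠ x ∧ x + 1 ≠ x + 2 := by
  revert x; decide

/-! ### Induction steps for P1, P2, P3 -/

lemma step1 (L : LeafData G v u e h₁ h₂) (ih1 : P1 (contract L)) : P1 G := by
  obtain ⟨κ', hκ'⟩ := ih1
  obtain ⟨hx1, hx2, hx3⟩ := fin3_add_facts (κ' L.e')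
  exact ⟨liftκ L κ' (κ' L.e' + 1) (κ' L.e' + 2),
    liftκ_proper hκ' hx3 hx1 hx2⟩

lemma step2 (L : LeafData G v u e h₁ h₂) (ih2 : P2 (contract L)) : P2 G := by
  intro S hS
  have hproj := hS.proj L
  rcases hS.vEdge L with ⟨heS, h1S, h2S⟩ | ⟨h1S, heS, h2S⟩ | ⟨h2S, heS, h1S⟩
  · -- e ∈ S
    obtain ⟨κ', hκ', hcl⟩ := ih2 _ hproj
    have he0 : κ' L.e' = 0 := (hcl L.e').1 heS
    refine ⟨liftκ L κ' 1 2, liftκ_proper hκ' (by decide) (by rw [he0]; decide)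
      (by rw [he0]; decide), ?_⟩
    intro f
    by_cases hf1 : f = h₁
    · subst hf1; rw [liftκ_h₁]; simp [h1S]
    · by_cases hf2 : f = h₂
      · subst hf2; rw [liftκ_h₂ L.hne]; simp [h2S]
      · rw [liftκ_other ⟨hf1, hf2⟩]
        exact hcl ⟨f, hf1, hf2⟩
  · -- h₁ ∈ S
    obtain ⟨κ', hκ', hcl⟩ := ih2 _ hproj
    have he0 : κ' L.e' ≠ 0 := fun h => heS ((hcl L.e').2 h)
    set t : Fin 3 := if κ' L.e' = 1 then 2 else 1 with ht
    have htfacts : t ≠ 0 ∧ t ≠ κ' L.e' ∧ (0 : Fin 3) ≠ κ' L.e' := by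
      rw [ht]; revert he0; generalize κ' L.e' = x; revert x; decide
    refine ⟨liftκ L κ' 0 t, liftκ_proper hκ' (Ne.symm htfacts.1) htfacts.2.2 htfacts.2.1, ?_⟩
    intro f
    by_cases hf1 : f = h₁
    · subst hf1; rw [liftκ_h₁]; simp [h1S]
    · by_cases hf2 : f = h₂
      · subst hf2; rw [liftκ_h₂ L.hne]; simp [h2S, htfacts.1]
      · rw [liftκ_other ⟨hf1, hf2⟩]
        exact hcl ⟨f, hf1, hf2⟩
  · -- h₂ ∈ S
    obtain ⟨κ', hκ', hcl⟩ := ih2 _ hproj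
    have he0 : κ' L.e' ≠ 0 := fun h => heS ((hcl L.e').2 h)
    set t : Fin 3 := if κ' L.e' = 1 then 2 else 1 with ht
    have htfacts : t ≠ 0 ∧ t ≠ κ' L.e' ∧ (0 : Fin 3) ≠ κ' L.e' := by
      rw [ht]; revert he0; generalize κ' L.e' = x; revert x; decide
    refine ⟨liftκ L κ' t 0, liftκ_proper hκ' htfacts.1 htfacts.2.1 htfacts.2.2, ?_⟩
    intro f
    by_cases hf1 : f = h₁
    · subst hf1; rw [liftκ_h₁]; simp [h1S, htfacts.1]
    · by_cases hf2 : f = h₂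
      · subst hf2; rw [liftκ_h₂ L.hne]; simp [h2S]
      · rw [liftκ_other ⟨hf1, hf2⟩]
        exact hcl ⟨f, hf1, hf2⟩

lemma step3 (L : LeafData G v u e h₁ h₂) (ih1 : P1 (contract L)) (ih3 : P3 (contract L)) :
    P3 G := by
  have half_case : ∀ f g : E, (f = h₁ ∨ f = h₂) → g ≠ h₁ → g ≠ h₂ →
      ∃ κ, Proper G κ ∧ κ f ≠ κ g := by
    intro f g hf hg1 hg2
    obtain ⟨κ', hκ'⟩ := ih1
    obtain ⟨hx1, hx2, hx3⟩ := fin3_add_facts (κ' L.e')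
    by_cases hc : κ' ⟨g, hg1, hg2⟩ = κ' L.e' + 1
    · -- use c₁ = +2 when f = h₁, c₂ = +2 when f = h₂
      rcases hf with rfl|rfl
      · refine ⟨liftκ L κ' (κ' L.e' + 2) (κ' L.e' + 1),
          liftκ_proper hκ' (Ne.symm hx3) hx2 hx1, ?_⟩
        rw [liftκ_h₁, liftκ_other ⟨hg1, hg2⟩, hc]
        exact Ne.symm hx3
      · refine ⟨liftκ L κ' (κ' L.e' + 1) (κ' L.e' + 2),
          liftκ_proper hκ' hx3 hx1 hx2, ?_⟩
        rw [liftκ_h₂ L.hne, liftκ_other ⟨hg1, hg2⟩, hc]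
        exact Ne.symm hx3
    · rcases hf with rfl|rfl
      · refine ⟨liftκ L κ' (κ' L.e' + 1) (κ' L.e' + 2),
          liftκ_proper hκ' hx3 hx1 hx2, ?_⟩
        rw [liftκ_h₁, liftκ_other ⟨hg1, hg2⟩]
        exact fun h => hc h.symm
      · refine ⟨liftκ L κ' (κ' L.e' + 2) (κ' L.e' + 1),
          liftκ_proper hκ' (Ne.symm hx3) hx2 hx1, ?_⟩
        rw [liftκ_h₂ L.hne, liftκ_other ⟨hg1, hg2⟩]
        exact fun h => hc h.symm
  intro f g hne
  by_cases hf1 : f = h₁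
  · by_cases hg2 : g = h₂
    · subst hf1; subst hg2
      obtain ⟨κ', hκ'⟩ := ih1
      obtain ⟨hx1, hx2, hx3⟩ := fin3_add_facts (κ' L.e')
      refine ⟨liftκ L κ' (κ' L.e' + 1) (κ' L.e' + 2),
        liftκ_proper hκ' hx3 hx1 hx2, ?_⟩
      rw [liftκ_h₁, liftκ_h₂ L.hne]
      exact hx3
    · by_cases hg1 : g = h₁
      · exact absurd (hf1.trans hg1.symm) hne
      · exact half_case f g (Or.inl hf1) hg1 hg2
  · by_cases hf2 : f = h₂
    · by_cases hg1 : g = h₁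
      · subst hf2; subst hg1
        obtain ⟨κ', hκ'⟩ := ih1
        obtain ⟨hx1, hx2, hx3⟩ := fin3_add_facts (κ' L.e')
        refine ⟨liftκ L κ' (κ' L.e' + 1) (κ' L.e' + 2),
          liftκ_proper hκ' hx3 hx1 hx2, ?_⟩
        rw [liftκ_h₂ L.hne, liftκ_h₁]
        exact hx3.symm
      · by_cases hg2 : g = h₂
        · exact absurd (hf2.trans hg2.symm) hne
        · exact half_case f g (Or.inr hf2) hg1 hg2
    · by_cases hg1 : g = h₁
      · obtain ⟨κ, hκ, hd⟩ := half_case g f (Or.inl hg1) hf1 hf2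
        exact ⟨κ, hκ, hd.symm⟩
      · by_cases hg2 : g = h₂
        · obtain ⟨κ, hκ, hd⟩ := half_case g f (Or.inr hg2) hf1 hf2
          exact ⟨κ, hκ, hd.symm⟩
        · obtain ⟨κ', hκ', hd⟩ := ih3 ⟨f, hf1, hf2⟩ ⟨g, hg1, hg2⟩
            (fun h => hne (Subtype.ext_iff.1 h))
          obtain ⟨hx1, hx2, hx3⟩ := fin3_add_facts (κ' L.e')
          refine ⟨liftκ L κ' (κ' L.e' + 1) (κ' L.e' + 2),
            liftκ_proper hκ' hx3 hx1 hx2, ?_⟩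
          rw [liftκ_other ⟨hf1, hf2⟩, liftκ_other ⟨hg1, hg2⟩]
          exact hd

end CTwork
namespace CTwork

variable {V E : Type*} [DecidableEq V]
variable {G : CubicGraph V E} {v u : V} {e h₁ h₂ : E}

/-! ### Small set helpers -/

lemma inter_empty_of {A B : Set E} (h : ∀ x, x ∈ A → x ∉ B) : A ∩ B = ∅ := by
  ext x
  simp only [Set.mem_inter_iff, Set.mem_empty_iff_false, iff_false]
  rintro ⟨hA, hB⟩
  exact h x hA hB

lemma not_mem_of_inter_empty {A B : Set E} (h : A ∩ B = ∅) {x : E} (hx : x ∈ A) : x ∉ B := by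
  intro hB
  have : x ∈ A ∩ B := ⟨hx, hB⟩
  rw [h] at this
  exact this

/-! ### Generalities about the reflexive-transitive closure of `Step` -/

lemma rtg_good {x₀ : E} {S S' : Set E} (h : Relation.ReflTransGen (Step G x₀) S S')
    (hS : Good G x₀ S) : Good G x₀ S' := by
  induction h with
  | refl => exact hS
  | tail _ hbc ih => exact hbc.1

lemma rtg_symm {x₀ : E} {S S' : Set E} (hS : Good G x₀ S)
    (h : Relation.ReflTransGen (Step G x₀) S S') :
    Relation.ReflTransGen (Step G x₀) S' S := by
  induction h with
  | refl => exact Relation.ReflTransGen.refl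
  | @tail b c hab hbc ih =>
    have hgb : Good G x₀ b := rtg_good hab hS
    refine Relation.ReflTransGen.head ⟨hgb, ?_⟩ ih
    rw [Set.inter_comm]
    exact hbc.2

/-! ### Auxiliary membership lemmas -/

lemma mem_S_cases (L : LeafData G v u e h₁ h₂) {S : Set E} {x : E} (hx : x ∈ S) :
    x = h₁ ∨ x = h₂ ∨
      ∃ hx' : x ≠ h₁ ∧ x ≠ h₂, (⟨x, hx'⟩ : {f : E // f ≠ h₁ ∧ f ≠ h₂}) ∈
        (Subtype.val ⁻¹' S : Set {f : E // f ≠ h₁ ∧ f ≠ h₂}) := by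
  by_cases hx1 : x = h₁
  · exact Or.inl hx1
  · by_cases hx2 : x = h₂
    · exact Or.inr (Or.inl hx2)
    · exact Or.inr (Or.inr ⟨⟨hx1, hx2⟩, hx⟩)

lemma proj_union_h (L : LeafData G v u e h₁ h₂) {h h' : E} (hp : L.IsPair h h')
    (A : Set {f : E // f ≠ h₁ ∧ f ≠ h₂}) :
    (Subtype.val ⁻¹' (Elift A ∪ {h}) : Set {f : E // f ≠ h₁ ∧ f ≠ h₂}) = A := by
  ext f
  simp only [Set.mem_preimage, Set.mem_union, Set.mem_singleton_iff]
  constructor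
  · rintro (hf | hf)
    · exact (mem_Elift' f).1 hf
    · exact absurd hf (hp.not_half f.2.1 f.2.2)
  · intro hf
    exact Or.inl ((mem_Elift' f).2 hf)

/-! ### Case A of the connectivity induction -/

lemma contract_ends_eq (L : LeafData G v u e h₁ h₂) (f : {f : E // f ≠ h₁ ∧ f ≠ h₂}) :
    (contract L).ends f = (G.ends f.1).subtype (· ≠ v) := rfl

lemma contract_half_of_half (L : LeafData G v u e h₁ h₂) {x₀ : E}
    (hx1 : x₀ ≠ h₁) (hx2 : x₀ ≠ h₂) (hx₀ : (G.ends x₀).card = 1) :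
    ((contract L).ends ⟨x₀, hx1, hx2⟩).card = 1 := by
  have hv : v ∉ G.ends x₀ := by
    intro hv
    have hxe : x₀ = e := L.eq_e_of_mem hv hx1 hx2
    rw [hxe, L.he] at hx₀
    rw [Finset.card_insert_of_notMem (by simp [L.hvu]), Finset.card_singleton] at hx₀
    omega
  rw [contract_ends_eq, Finset.card_subtype, Finset.filter_ne',
    Finset.erase_eq_of_notMem hv]
  exact hx₀

lemma x₀_ne_e (L : LeafData G v u e h₁ h₂) {x₀ : E} (hx₀ : (G.ends x₀).card = 1) :
    x₀ ≠ e := by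
  intro h
  rw [h, L.he, Finset.card_insert_of_notMem (by simp [L.hvu]), Finset.card_singleton] at hx₀
  omega

lemma lift_rtg_A (L : LeafData G v u e h₁ h₂) {x₀ : E}
    (hx1 : x₀ ≠ h₁) (hx2 : x₀ ≠ h₂)
    {T T' : Set {f : E // f ≠ h₁ ∧ f ≠ h₂}}
    (hrtg : Relation.ReflTransGen (Step (contract L) ⟨x₀, hx1, hx2⟩) T T') :
    ∀ S, Good G x₀ S → Subtype.val ⁻¹' S = T →
      ∃ S', Good G x₀ S' ∧ Subtype.val ⁻¹' S' = T' ∧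
        Relation.ReflTransGen (Step G x₀) S S' := by
  induction hrtg with
  | refl => exact fun S hS hST => ⟨S, hS, hST, Relation.ReflTransGen.refl⟩
  | @tail Tb Tc hab hbc ih =>
    intro S hS hST
    obtain ⟨Sb, hSb, hSbT, hrtgb⟩ := ih S hS hST
    obtain ⟨⟨hTc, hx₀Tc⟩, hdis⟩ := hbc
    by_cases he' : L.e' ∈ Tc
    · refine ⟨Elift Tc, ⟨oneFactor_lift_e L hTc he', ?_⟩, proj_Elift, ?_⟩
      · intro hmem
        exact hx₀Tc ((mem_Elift' ⟨x₀, hx1, hx2⟩).1 hmem)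
      · refine hrtgb.tail ⟨⟨oneFactor_lift_e L hTc he', ?_⟩, ?_⟩
        · intro hmem
          exact hx₀Tc ((mem_Elift' ⟨x₀, hx1, hx2⟩).1 hmem)
        · refine inter_empty_of ?_
          intro x hxSb hxTc
          rcases mem_S_cases L hxSb with rfl|rfl|⟨hx', hxT⟩
          · exact not_mem_Elift_left hxTc
          · exact not_mem_Elift_right hxTc
          · obtain ⟨hx'', hxTc'⟩ := mem_Elift.1 hxTc
            rw [hSbT] at hxT
            exact not_mem_of_inter_empty hdis hxT hxTc'
    · -- choose the half-edge not in Sb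
      have hkey : ∀ h h', L.IsPair h h' → h ∉ Sb →
          ∃ S', Good G x₀ S' ∧ Subtype.val ⁻¹' S' = Tc ∧
            Relation.ReflTransGen (Step G x₀) S S' := by
        intro h h' hp hhSb
        have h1f : OneFactor G (Elift Tc ∪ {h}) := oneFactor_lift_h L hp hTc he'
        have hx₀mem : x₀ ∉ Elift Tc ∪ {h} := by
          rintro (hmem | hmem)
          · exact hx₀Tc ((mem_Elift' ⟨x₀, hx1, hx2⟩).1 hmem)
          · exact (hp.not_half hx1 hx2) hmem
        have hdisj : Sb ∩ (Elift Tc ∪ {h}) = ∅ := by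
          refine inter_empty_of ?_
          rintro x hxSb (hxTc | hxh)
          · rcases mem_S_cases L hxSb with rfl|rfl|⟨hx', hxT⟩
            · exact not_mem_Elift_left hxTc
            · exact not_mem_Elift_right hxTc
            · obtain ⟨hx'', hxTc'⟩ := mem_Elift.1 hxTc
              rw [hSbT] at hxT
              exact not_mem_of_inter_empty hdis hxT hxTc'
          · rw [Set.mem_singleton_iff] at hxh
            exact hhSb (hxh ▸ hxSb)
        refine ⟨Elift Tc ∪ {h}, ⟨h1f, hx₀mem⟩, ?_, hrtgb.tail ⟨⟨h1f, hx₀mem⟩, hdisj⟩⟩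
        rw [proj_union_h L hp]
      by_cases hh1 : h₁ ∈ Sb
      · have hh2 : h₂ ∉ Sb := by
          intro hh2
          exact L.hne (hSb.1.eq_at hh1 L.vh₁ hh2 L.vh₂)
        exact hkey h₂ h₁ L.pair₂₁ hh2
      · exact hkey h₁ h₂ L.pair₁₂ hh1

lemma good_proj (L : LeafData G v u e h₁ h₂) {x₀ : E}
    (hx1 : x₀ ≠ h₁) (hx2 : x₀ ≠ h₂) {S : Set E} (hS : Good G x₀ S) :
    Good (contract L) ⟨x₀, hx1, hx2⟩ (Subtype.val ⁻¹' S) :=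
  ⟨hS.1.proj L, fun hmem => hS.2 hmem⟩

lemma step4A (L : LeafData G v u e h₁ h₂) (ih3 : P3 (contract L)) (ih4 : P4 (contract L))
    {x₀ : E} (hx1 : x₀ ≠ h₁) (hx2 : x₀ ≠ h₂) (hx₀ : (G.ends x₀).card = 1) :
    ∀ S S', Good G x₀ S → Good G x₀ S' → Relation.ReflTransGen (Step G x₀) S S' := by
  -- the canonical target: a one-factor containing e and avoiding x₀
  have hne : L.e' ≠ (⟨x₀, hx1, hx2⟩ : {f : E // f ≠ h₁ ∧ f ≠ h₂}) := by
    intro h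
    exact (x₀_ne_e L hx₀) (Subtype.ext_iff.1 h).symm
  obtain ⟨κ', hκ', hd⟩ := ih3 L.e' ⟨x₀, hx1, hx2⟩ hne
  set Te : Set {f : E // f ≠ h₁ ∧ f ≠ h₂} := {f | κ' f = κ' L.e'} with hTe
  have hTe1f : OneFactor (contract L) Te := hκ'.oneFactor _
  have heTe : L.e' ∈ Te := rfl
  have hx₀Te : (⟨x₀, hx1, hx2⟩ : {f : E // f ≠ h₁ ∧ f ≠ h₂}) ∉ Te := fun hmem => hd hmem.symm
  have hgoodTe : Good (contract L) ⟨x₀, hx1, hx2⟩ Te := ⟨hTe1f, hx₀Te⟩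
  have hx₀half : ((contract L).ends ⟨x₀, hx1, hx2⟩).card = 1 :=
    contract_half_of_half L hx1 hx2 hx₀
  -- every good set reaches Elift Te
  have key : ∀ S, Good G x₀ S → Relation.ReflTransGen (Step G x₀) S (Elift Te) := by
    intro S hS
    have hrtg' := ih4 _ hx₀half _ _ (good_proj L hx1 hx2 hS) hgoodTe
    obtain ⟨S₁, hS₁, hS₁T, hrtg⟩ := lift_rtg_A L hx1 hx2 hrtg' S hS rfl
    have heS₁ : e ∈ S₁ := by
      have : L.e' ∈ (Subtype.val ⁻¹' S₁ : Set {f : E // f ≠ h₁ ∧ f ≠ h₂}) := by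
        rw [hS₁T]; exact heTe
      exact this
    have hh1 : h₁ ∉ S₁ := fun hmem => L.eh₁ (hS₁.1.eq_at heS₁ L.ve hmem L.vh₁)
    have hh2 : h₂ ∉ S₁ := fun hmem => L.eh₂ (hS₁.1.eq_at heS₁ L.ve hmem L.vh₂)
    have : S₁ = Elift Te := by
      rw [← hS₁T]
      exact (lift_proj_eq L hh1 hh2).symm
    rwa [this] at hrtg
  intro S S' hS hS'
  exact (key S hS).trans (rtg_symm hS' (key S' hS'))

/-! ### Case B of the connectivity induction -/

lemma OneFactor.vEdge' (L : LeafData G v u e h₁ h₂) {h h' : E} (hp : L.IsPair h h')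
    {S : Set E} (hS : OneFactor G S) :
    (e ∈ S ∧ h ∉ S ∧ h' ∉ S) ∨ (h ∈ S ∧ e ∉ S ∧ h' ∉ S) ∨ (h' ∈ S ∧ e ∉ S ∧ h ∉ S) := by
  rcases hp with ⟨rfl, rfl⟩ | ⟨rfl, rfl⟩
  · exact hS.vEdge L
  · rcases hS.vEdge L with h1|h2|h3
    · exact Or.inl ⟨h1.1, h1.2.2, h1.2.1⟩
    · exact Or.inr (Or.inr ⟨h2.1, h2.2.1, h2.2.2⟩)
    · exact Or.inr (Or.inl ⟨h3.1, h3.2.1, h3.2.2⟩)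

lemma connect_hlifts (L : LeafData G v u e h₁ h₂) {h h' : E} (hp : L.IsPair h h')
    (ih4 : P4 (contract L))
    {W W' : Set {f : E // f ≠ h₁ ∧ f ≠ h₂}}
    (hW : OneFactor (contract L) W) (hW' : OneFactor (contract L) W')
    (heW : L.e' ∉ W) (heW' : L.e' ∉ W') :
    Relation.ReflTransGen (Step G h) (Elift W ∪ {h'}) (Elift W' ∪ {h'}) := by
  have hrtg' := ih4 L.e' (contract_e'_half L) W W' ⟨hW, heW⟩ ⟨hW', heW'⟩
  -- lift the chain, two steps at a time
  have main : ∀ {A B : Set {f : E // f ≠ h₁ ∧ f ≠ h₂}},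
      Relation.ReflTransGen (Step (contract L) L.e') A B → Good (contract L) L.e' A →
      Relation.ReflTransGen (Step G h) (Elift A ∪ {h'}) (Elift B ∪ {h'}) := by
    intro A B hrtg hgood
    induction hrtg with
    | refl => exact Relation.ReflTransGen.refl
    | @tail Tb Tc hab hbc ih =>
      have hgb : Good (contract L) L.e' Tb := rtg_good hab hgood
      obtain ⟨⟨hTc, heTc⟩, hdis⟩ := hbc
      -- Z = complement of Tb and Tc contains e'
      set Z : Set {f : E // f ≠ h₁ ∧ f ≠ h₂} := {f | f ∉ Tb ∧ f ∉ Tc} with hZ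
      have hZ1f : OneFactor (contract L) Z := compl_oneFactor hgb.1 hTc hdis
      have heZ : L.e' ∈ Z := ⟨hgb.2, heTc⟩
      have hZlift : OneFactor G (Elift Z) := oneFactor_lift_e L hZ1f heZ
      have hhZ : h ∉ Elift Z := not_mem_Elift_pair hp
      have hh'Z : h' ∉ Elift Z := not_mem_Elift_pair hp.symm
      have hBgood : Good G h (Elift Tc ∪ {h'}) := by
        refine ⟨oneFactor_lift_h L hp.symm hTc heTc, ?_⟩
        rintro (hmem | hmem)
        · exact (not_mem_Elift_pair hp) hmem
        · exact hp.ne (Set.mem_singleton_iff.1 hmem)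
      have step1 : Step G h (Elift Tb ∪ {h'}) (Elift Z) := by
        refine ⟨⟨hZlift, hhZ⟩, inter_empty_of ?_⟩
        rintro x (hx | hx) hxZ
        · obtain ⟨hx', hxTb⟩ := mem_Elift.1 hx
          obtain ⟨hx'', hxZ'⟩ := mem_Elift.1 hxZ
          exact hxZ'.1 hxTb
        · rw [Set.mem_singleton_iff] at hx
          exact hh'Z (hx ▸ hxZ)
      have step2 : Step G h (Elift Z) (Elift Tc ∪ {h'}) := by
        refine ⟨hBgood, inter_empty_of ?_⟩
        rintro x hxZ (hx | hx)
        · obtain ⟨hx', hxZ'⟩ := mem_Elift.1 hxZ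
          obtain ⟨hx'', hxTc'⟩ := mem_Elift.1 hx
          exact hxZ'.2 hxTc'
        · rw [Set.mem_singleton_iff] at hx
          exact hh'Z (hx ▸ hxZ)
      exact (ih.tail step1).tail step2
  exact main hrtg' ⟨hW, heW⟩

lemma step4B (L : LeafData G v u e h₁ h₂) {h h' : E} (hp : L.IsPair h h')
    (ih2 : P2 (contract L)) (ih4 : P4 (contract L)) :
    ∀ S S', Good G h S → Good G h S' → Relation.ReflTransGen (Step G h) S S' := by
  -- reduce any good set to one of the form Elift W ∪ {h'}
  have reduce : ∀ S, Good G h S →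
      ∃ W, OneFactor (contract L) W ∧ L.e' ∉ W ∧
        Relation.ReflTransGen (Step G h) S (Elift W ∪ {h'}) := by
    intro S hS
    have hproj := hS.1.proj L
    rcases hS.1.vEdge' L hp with ⟨heS, hhS, hh'S⟩ | ⟨hhS, -, -⟩ | ⟨hh'S, heS, hhS⟩
    · -- e ∈ S : attach to an h'-lift
      obtain ⟨κ', hκ', hcl⟩ := ih2 _ hproj
      have he0 : κ' L.e' = 0 := (hcl L.e').1 heS
      set W : Set {f : E // f ≠ h₁ ∧ f ≠ h₂} := {f | κ' f = 1} with hW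
      have hW1f : OneFactor (contract L) W := hκ'.oneFactor _
      have heW : L.e' ∉ W := by
        intro hm
        have h1 : κ' L.e' = 1 := hm
        rw [he0] at h1
        exact absurd h1 (by decide)
      have hgoodA : Good G h (Elift W ∪ {h'}) := by
        refine ⟨oneFactor_lift_h L hp.symm hW1f heW, ?_⟩
        rintro (hmem | hmem)
        · exact (not_mem_Elift_pair hp) hmem
        · exact hp.ne (Set.mem_singleton_iff.1 hmem)
      refine ⟨W, hW1f, heW, Relation.ReflTransGen.single ⟨hgoodA, inter_empty_of ?_⟩⟩
      rintro x hxS (hx | hx)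
      · rcases mem_S_cases L hxS with rfl|rfl|⟨hx', hxT⟩
        · exact (not_mem_Elift_pair (L := L) L.pair₁₂) hx
        · exact (not_mem_Elift_pair (L := L) L.pair₂₁) hx
        · obtain ⟨hx'', hxW⟩ := mem_Elift.1 hx
          have h0 : κ' ⟨x, hx'⟩ = 0 := (hcl ⟨x, hx'⟩).1 hxT
          have h1 : κ' ⟨x, hx'⟩ = 1 := hxW
          rw [h0] at h1
          exact absurd h1 (by decide)
      · rw [Set.mem_singleton_iff] at hx
        exact hh'S (hx ▸ hxS)
    · exact absurd hhS hS.2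
    · -- h' ∈ S : S is already of the required form
      refine ⟨Subtype.val ⁻¹' S, hproj, fun hm => heS hm, ?_⟩
      have : Elift ((Subtype.val : {f : E // f ≠ h₁ ∧ f ≠ h₂} → E) ⁻¹' S) ∪ {h'} = S :=
        lift_proj_union L hp.symm hh'S hhS
      rw [this]
  intro S S' hS hS'
  obtain ⟨W, hW, heW, hr⟩ := reduce S hS
  obtain ⟨W', hW', heW', hr'⟩ := reduce S' hS'
  exact (hr.trans (connect_hlifts L hp ih4 hW hW' heW heW')).trans (rtg_symm hS' hr')

lemma step4 (L : LeafData G v u e h₁ h₂) (ih2 : P2 (contract L)) (ih3 : P3 (contract L))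
    (ih4 : P4 (contract L)) : P4 G := by
  intro x₀ hx₀ S S' hS hS'
  by_cases hx1 : x₀ = h₁
  · subst hx1
    exact step4B L L.pair₁₂ ih2 ih4 S S' hS hS'
  · by_cases hx2 : x₀ = h₂
    · subst hx2
      exact step4B L L.pair₂₁ ih2 ih4 S S' hS hS'
    · exact step4A L ih3 ih4 hx1 hx2 hx₀ S S' hS hS'

end CTwork
namespace CTwork

variable {V E : Type*} [DecidableEq V]
variable {G : CubicGraph V E} {v u : V} {e h₁ h₂ : E}

/-! ### Disjointness and inequality helpers for lifted one-factors -/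

lemma not_mem_Elift_half {b : E} (hb : b = h₁ ∨ b = h₂)
    {A : Set {f : E // f ≠ h₁ ∧ f ≠ h₂}} : b ∉ Elift A := by
  rcases hb with rfl|rfl
  exacts [not_mem_Elift_left, not_mem_Elift_right]

lemma disj_ll {A B : Set {f : E // f ≠ h₁ ∧ f ≠ h₂}} (hAB : A ∩ B = ∅) :
    Elift A ∩ Elift B = ∅ := Elift_inter hAB

lemma disj_lh {A B : Set {f : E // f ≠ h₁ ∧ f ≠ h₂}} (hAB : A ∩ B = ∅)
    {b : E} (hb : b = h₁ ∨ b = h₂) : Elift A ∩ (Elift B ∪ {b}) = ∅ := by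
  refine inter_empty_of ?_
  rintro x hxA (hxB | hxb)
  · obtain ⟨hx', hA⟩ := mem_Elift.1 hxA
    obtain ⟨hx'', hB⟩ := mem_Elift.1 hxB
    exact not_mem_of_inter_empty hAB hA hB
  · rw [Set.mem_singleton_iff] at hxb
    exact not_mem_Elift_half hb (hxb ▸ hxA)

lemma disj_hl {A B : Set {f : E // f ≠ h₁ ∧ f ≠ h₂}} (hAB : A ∩ B = ∅)
    {a : E} (ha : a = h₁ ∨ a = h₂) : (Elift A ∪ {a}) ∩ Elift B = ∅ := by
  rw [Set.inter_comm]
  rw [Set.inter_comm] at hAB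
  exact disj_lh hAB ha

lemma disj_hh {A B : Set {f : E // f ≠ h₁ ∧ f ≠ h₂}} (hAB : A ∩ B = ∅)
    {a b : E} (ha : a = h₁ ∨ a = h₂) (hb : b = h₁ ∨ b = h₂) (hab : a ≠ b) :
    (Elift A ∪ {a}) ∩ (Elift B ∪ {b}) = ∅ := by
  refine inter_empty_of ?_
  rintro x (hxA | hxa) (hxB | hxb)
  · obtain ⟨hx', hA⟩ := mem_Elift.1 hxA
    obtain ⟨hx'', hB⟩ := mem_Elift.1 hxB
    exact not_mem_of_inter_empty hAB hA hB
  · rw [Set.mem_singleton_iff] at hxb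
    exact not_mem_Elift_half hb (hxb ▸ hxA)
  · rw [Set.mem_singleton_iff] at hxa
    exact not_mem_Elift_half ha (hxa ▸ hxB)
  · rw [Set.mem_singleton_iff] at hxa hxb
    exact hab (hxa.symm.trans hxb)

lemma ne_lh {A B : Set {f : E // f ≠ h₁ ∧ f ≠ h₂}} {b : E} (hb : b = h₁ ∨ b = h₂) :
    Elift A ≠ Elift B ∪ {b} := by
  intro h
  have : b ∈ Elift A := h ▸ (Or.inr rfl)
  exact not_mem_Elift_half hb this

lemma ne_hh {A B : Set {f : E // f ≠ h₁ ∧ f ≠ h₂}} {a b : E}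
    (ha : a = h₁ ∨ a = h₂) (hab : a ≠ b) : Elift A ∪ {a} ≠ Elift B ∪ {b} := by
  intro h
  have : a ∈ Elift B ∪ {b} := h ▸ (Or.inr rfl : a ∈ Elift A ∪ {a})
  rcases this with hmem | hmem
  · exact not_mem_Elift_half ha hmem
  · exact hab (Set.mem_singleton_iff.1 hmem)

/-! ### The rigidity induction step -/

lemma step5 (L : LeafData G v u e h₁ h₂) (ih2 : P2 (contract L)) (ih4 : P4 (contract L))
    (ih5 : P5 (contract L)) : P5 G := by
  classical
  intro cl hcl
  have hl1 : ∀ (T : Set {f : E // f ≠ h₁ ∧ f ≠ h₂}), OneFactor (contract L) T → L.e' ∉ T →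
      OneFactor G (Elift T ∪ {h₁}) := fun T hT he => oneFactor_lift_h L L.pair₁₂ hT he
  have hl2 : ∀ (T : Set {f : E // f ≠ h₁ ∧ f ≠ h₂}), OneFactor (contract L) T → L.e' ∉ T →
      OneFactor G (Elift T ∪ {h₂}) := fun T hT he => oneFactor_lift_h L L.pair₂₁ hT he
  by_cases hsplit : ∃ T, OneFactor (contract L) T ∧ L.e' ∉ T ∧
      cl (Elift T ∪ {h₁}) ≠ cl (Elift T ∪ {h₂})
  · -- Case 2 : some split exists; the partition is determined at `v`.
    obtain ⟨T₀, hT₀, heT₀, hne0⟩ := hsplit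
    set i := cl (Elift T₀ ∪ {h₁}) with hi
    set j := cl (Elift T₀ ∪ {h₂}) with hj
    have hij : i ≠ j := hne0
    set P : Set {f : E // f ≠ h₁ ∧ f ≠ h₂} → Prop :=
      fun T => cl (Elift T ∪ {h₁}) = i ∧ cl (Elift T ∪ {h₂}) = j with hP
    -- propagation of P along disjointness
    have prop : ∀ X Y, Good (contract L) L.e' X → Good (contract L) L.e' Y →
        X ∩ Y = ∅ → P X → P Y := by
      intro X Y hX hY hXY hPX
      set Z : Set {f : E // f ≠ h₁ ∧ f ≠ h₂} := {f | f ∉ X ∧ f ∉ Y} with hZ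
      have hZ1f : OneFactor (contract L) Z := compl_oneFactor hX.1 hY.1 hXY
      have heZ : L.e' ∈ Z := ⟨hX.2, hY.2⟩
      have hZX : Z ∩ X = ∅ := inter_empty_of fun f hf hfX => hf.1 hfX
      have hZY : Z ∩ Y = ∅ := inter_empty_of fun f hf hfY => hf.2 hfY
      have hZlift : OneFactor G (Elift Z) := oneFactor_lift_e L hZ1f heZ
      have hki : cl (Elift Z) ≠ i := by
        rw [← hPX.1]
        exact hcl _ _ hZlift (hl1 X hX.1 hX.2) (ne_lh (Or.inl rfl)) (disj_lh hZX (Or.inl rfl))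
      have hkj : cl (Elift Z) ≠ j := by
        rw [← hPX.2]
        exact hcl _ _ hZlift (hl2 X hX.1 hX.2) (ne_lh (Or.inr rfl)) (disj_lh hZX (Or.inr rfl))
      have hY1 : cl (Elift Y ∪ {h₁}) ≠ cl (Elift Z) := by
        refine hcl _ _ (hl1 Y hY.1 hY.2) hZlift ?_ ?_
        · intro hq
          exact (ne_lh (A := Z) (B := Y) (Or.inl rfl)) hq.symm
        · rw [Set.inter_comm] at hZY
          exact disj_hl hZY (Or.inl rfl)
      have hY1j : cl (Elift Y ∪ {h₁}) ≠ j := by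
        rw [← hPX.2]
        refine hcl _ _ (hl1 Y hY.1 hY.2) (hl2 X hX.1 hX.2) ?_ ?_
        · exact ne_hh (Or.inl rfl) L.hne
        · rw [Set.inter_comm] at hXY
          exact disj_hh hXY (Or.inl rfl) (Or.inr rfl) L.hne
      have hY2 : cl (Elift Y ∪ {h₂}) ≠ cl (Elift Z) := by
        refine hcl _ _ (hl2 Y hY.1 hY.2) hZlift ?_ ?_
        · intro hq
          exact (ne_lh (A := Z) (B := Y) (Or.inr rfl)) hq.symm
        · rw [Set.inter_comm] at hZY
          exact disj_hl hZY (Or.inr rfl)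
      have hY2i : cl (Elift Y ∪ {h₂}) ≠ i := by
        rw [← hPX.1]
        refine hcl _ _ (hl2 Y hY.1 hY.2) (hl1 X hX.1 hX.2) ?_ ?_
        · exact ne_hh (Or.inr rfl) L.hne.symm
        · rw [Set.inter_comm] at hXY
          exact disj_hh hXY (Or.inr rfl) (Or.inl rfl) L.hne.symm
      have hjk : j ≠ cl (Elift Z) := fun h => hkj h.symm
      have hik : i ≠ cl (Elift Z) := fun h => hki h.symm
      constructor
      · exact fin3_third hjk hY1j hY1 hij hik
      · exact fin3_third hik hY2i hY2 hij.symm hjk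
    have prop_rtg : ∀ X Y, Good (contract L) L.e' X →
        Relation.ReflTransGen (Step (contract L) L.e') X Y → P X → P Y := by
      intro X Y hX hrtg hPX
      induction hrtg with
      | refl => exact hPX
      | @tail b c hab hbc ih =>
        exact prop b c (rtg_good hab hX) hbc.1 hbc.2 ih
    have hT₀good : Good (contract L) L.e' T₀ := ⟨hT₀, heT₀⟩
    have hPT₀ : P T₀ := ⟨rfl, rfl⟩
    have hPall : ∀ T, Good (contract L) L.e' T → P T := by
      intro T hT
      exact prop_rtg T₀ T hT₀good
        (ih4 L.e' (contract_e'_half L) T₀ T hT₀good hT) hPT₀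
    -- one-factors containing e avoid both i and j
    have he_case : ∀ S, OneFactor G S → e ∈ S → cl S ≠ i ∧ cl S ≠ j := by
      intro S hS heS
      rcases hS.vEdge L with ⟨-, h1S, h2S⟩ | ⟨-, heS', -⟩ | ⟨-, heS', -⟩
      · have hSeq : S = Elift (Subtype.val ⁻¹' S) := (lift_proj_eq L h1S h2S).symm
        have hT : OneFactor (contract L) (Subtype.val ⁻¹' S) := hS.proj L
        have heT : L.e' ∈ (Subtype.val ⁻¹' S : Set {f : E // f ≠ h₁ ∧ f ≠ h₂}) := heS
        obtain ⟨κ', hκ', hcl0⟩ := ih2 _ hT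
        have he0 : κ' L.e' = 0 := (hcl0 L.e').1 heT
        set X : Set {f : E // f ≠ h₁ ∧ f ≠ h₂} := {f | κ' f = 1} with hX
        have hX1f : OneFactor (contract L) X := hκ'.oneFactor _
        have heX : L.e' ∉ X := by
          intro hm
          have h1 : κ' L.e' = 1 := hm
          rw [he0] at h1
          exact absurd h1 (by decide)
        have hTX : (Subtype.val ⁻¹' S : Set {f : E // f ≠ h₁ ∧ f ≠ h₂}) ∩ X = ∅ := by
          refine inter_empty_of ?_
          intro f hf hfX
          have h0 : κ' f = 0 := (hcl0 f).1 hf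
          have h1 : κ' f = 1 := hfX
          rw [h0] at h1
          exact absurd h1 (by decide)
        have hPX := hPall X ⟨hX1f, heX⟩
        constructor
        · rw [← hPX.1, hSeq]
          exact hcl _ _ (hSeq ▸ hS) (hl1 X hX1f heX) (ne_lh (Or.inl rfl)) (disj_lh hTX (Or.inl rfl))
        · rw [← hPX.2, hSeq]
          exact hcl _ _ (hSeq ▸ hS) (hl2 X hX1f heX) (ne_lh (Or.inr rfl)) (disj_lh hTX (Or.inr rfl))
      · exact absurd heS heS'
      · exact absurd heS heS'
    -- determination at v
    refine ⟨v, fun S T hS hT hsame => ?_⟩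
    rcases hS.vEdge L with ⟨heS, h1S, h2S⟩ | ⟨h1S, heS, h2S⟩ | ⟨h2S, heS, h1S⟩
    · have heT : e ∈ T := (hsame e L.ve).1 heS
      obtain ⟨hSi, hSj⟩ := he_case S hS heS
      obtain ⟨hTi, hTj⟩ := he_case T hT heT
      exact fin3_third hij hSi hSj hTi hTj
    · -- h₁ ∈ S
      have h1T : h₁ ∈ T := (hsame h₁ L.vh₁).1 h1S
      have key : ∀ S', OneFactor G S' → h₁ ∈ S' → cl S' = i := by
        intro S' hS' h1S'
        rcases hS'.vEdge L with ⟨heS', h1S'', -⟩ | ⟨-, heS', h2S'⟩ | ⟨-, -, h1S''⟩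
        · exact absurd h1S' h1S''
        · have hSeq : S' = Elift (Subtype.val ⁻¹' S') ∪ {h₁} :=
            (lift_proj_union L L.pair₁₂ h1S' h2S').symm
          have hgood : Good (contract L) L.e' (Subtype.val ⁻¹' S') :=
            ⟨hS'.proj L, fun hm => heS' hm⟩
          have := (hPall _ hgood).1
          rw [← hSeq] at this
          exact this
        · exact absurd h1S' h1S''
      rw [key S hS h1S, key T hT h1T]
    · -- h₂ ∈ S
      have h2T : h₂ ∈ T := (hsame h₂ L.vh₂).1 h2S
      have key : ∀ S', OneFactor G S' → h₂ ∈ S' → cl S' = j := by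
        intro S' hS' h2S'
        rcases hS'.vEdge L with ⟨heS', -, h2S''⟩ | ⟨-, -, h2S''⟩ | ⟨-, heS', h1S'⟩
        · exact absurd h2S' h2S''
        · exact absurd h2S' h2S''
        · have hSeq : S' = Elift (Subtype.val ⁻¹' S') ∪ {h₂} :=
            (lift_proj_union L L.pair₂₁ h2S' h1S').symm
          have hgood : Good (contract L) L.e' (Subtype.val ⁻¹' S') :=
            ⟨hS'.proj L, fun hm => heS' hm⟩
          have := (hPall _ hgood).2
          rw [← hSeq] at this
          exact this
      rw [key S hS h2S, key T hT h2T]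
  · -- Case 1 : no split; use the inductive hypothesis on the contraction
    push_neg at hsplit
    set cl' : Set {f : E // f ≠ h₁ ∧ f ≠ h₂} → Fin 3 :=
      fun T => if L.e' ∈ T then cl (Elift T) else cl (Elift T ∪ {h₁}) with hcl'def
    have hcl' : ∀ T T', OneFactor (contract L) T → OneFactor (contract L) T' →
        T ≠ T' → T ∩ T' = ∅ → cl' T ≠ cl' T' := by
      intro T T' hT hT' hne hdis
      by_cases heT : L.e' ∈ T
      · have heT' : L.e' ∉ T' := not_mem_of_inter_empty hdis heT
        rw [hcl'def]
        simp only [if_pos heT, if_neg heT']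
        exact hcl _ _ (oneFactor_lift_e L hT heT) (hl1 T' hT' heT')
          (ne_lh (Or.inl rfl)) (disj_lh hdis (Or.inl rfl))
      · by_cases heT' : L.e' ∈ T'
        · rw [hcl'def]
          simp only [if_pos heT', if_neg heT]
          rw [Set.inter_comm] at hdis
          intro hq
          exact hcl _ _ (oneFactor_lift_e L hT' heT') (hl1 T hT heT)
            (ne_lh (Or.inl rfl)) (disj_lh hdis (Or.inl rfl)) hq.symm
        · rw [hcl'def]
          simp only [if_neg heT, if_neg heT']
          rw [hsplit T' hT' heT']
          exact hcl _ _ (hl1 T hT heT) (hl2 T' hT' heT')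
            (ne_hh (Or.inl rfl) L.hne) (disj_hh hdis (Or.inl rfl) (Or.inr rfl) L.hne)
    obtain ⟨w', hw'⟩ := ih5 cl' hcl'
    have keyπ : ∀ S, OneFactor G S → cl S = cl' (Subtype.val ⁻¹' S) := by
      intro S hS
      rcases hS.vEdge L with ⟨heS, h1S, h2S⟩ | ⟨h1S, heS, h2S⟩ | ⟨h2S, heS, h1S⟩
      · rw [hcl'def]
        simp only [if_pos (show L.e' ∈ (Subtype.val ⁻¹' S : Set _) from heS)]
        rw [lift_proj_eq L h1S h2S]
      · rw [hcl'def]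
        simp only [if_neg (show L.e' ∉ (Subtype.val ⁻¹' S : Set _) from fun hm => heS hm)]
        rw [lift_proj_union L L.pair₁₂ h1S h2S]
      · rw [hcl'def]
        simp only [if_neg (show L.e' ∉ (Subtype.val ⁻¹' S : Set _) from fun hm => heS hm)]
        rw [hsplit _ (hS.proj L) (fun hm => heS hm)]
        rw [lift_proj_union L L.pair₂₁ h2S h1S]
    refine ⟨w'.1, fun S T hS hT hsame => ?_⟩
    rw [keyπ S hS, keyπ T hT]
    refine hw' _ _ (hS.proj L) (hT.proj L) ?_
    intro x hx
    exact hsame x.1 ((mem_ends_contract L).1 hx)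
  
end CTwork
namespace CTwork

universe uV uE

theorem master {V : Type uV} {E : Type uE} [DecidableEq V] [Fintype V]
    (G : CubicGraph V E) (ht : (underlying G).IsTree) :
    P1 G ∧ P2 G ∧ P3 G ∧ P4 G ∧ P5 G := by
  suffices H : ∀ n : ℕ, ∀ {V : Type uV} {E : Type uE} [DecidableEq V] [Fintype V]
      (G : CubicGraph V E), (underlying G).IsTree → Fintype.card V ≤ n →
      P1 G ∧ P2 G ∧ P3 G ∧ P4 G ∧ P5 G by
    exact H (Fintype.card V) G ht le_rfl
  intro n
  induction n with
  | zero =>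
    intro V E _ _ G ht hcard
    have hne : Nonempty V := ht.isConnected.nonempty
    have := Fintype.card_pos (α := V)
    omega
  | succ n ih =>
    intro V E _ _ G ht hcard
    by_cases h1 : Fintype.card V = 1
    · obtain ⟨v, hv⟩ := Fintype.card_eq_one_iff.1 h1
      exact base_case G (fun w => hv w)
    · have hne : Nonempty V := ht.isConnected.nonempty
      have hpos := Fintype.card_pos (α := V)
      have h2 : 2 ≤ Fintype.card V := by omega
      obtain ⟨v, u, e, h₁, h₂, L⟩ := exists_leaf G ht h2
      have hV2 : ∃ x : V, x ≠ v := ⟨u, fun h => L.hvu h.symm⟩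
      have ht' := contract_isTree L ht hV2
      have hcard' : Fintype.card {x : V // x ≠ v} ≤ n := by
        have hlt : Fintype.card {x : V // x ≠ v} < Fintype.card V :=
          Fintype.card_subtype_lt (x := v) (by simp)
        omega
      obtain ⟨ih1, ih2, ih3, ih4, ih5⟩ := ih (contract L) ht' hcard'
      exact ⟨step1 L ih1, step2 L ih2, step3 L ih1 ih3,
        step4 L ih2 ih3 ih4, step5 L ih2 ih4 ih5⟩

end CTwork
namespace CTwork

variable {V E : Type*} [DecidableEq V] {G : CubicGraph V E}

/-! ### Color classes of the line graph are exactly one-factors -/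

lemma isColorClass_iff_oneFactor (hP2 : P2 G) {S : Set E} :
    IsColorClass 3 (lineGraph G) S ↔ OneFactor G S := by
  constructor
  · exact oneFactor_of_isColorClass
  · intro hS
    obtain ⟨κ, hκ, hcl⟩ := hP2 S hS
    exact isColorClass_iff_aux.2 ⟨κ, hκ, 0, by ext f; exact hcl f⟩

/-! ### Adjacency in the coloring complex is disjointness -/

lemma cc_adj (hP2 : P2 G) {C D : {S : Set E // IsColorClass 3 (lineGraph G) S}} :
    (ColoringComplex 3 (lineGraph G)).Adj C D ↔ C ≠ D ∧ C.1 ∩ D.1 = ∅ := by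
  constructor
  · rintro ⟨hne, c, hc, ⟨i, hi⟩, ⟨j, hj⟩⟩
    refine ⟨hne, ?_⟩
    obtain ⟨κ, hκp, hci⟩ := isColoring_iff.1 hc
    have hij : i ≠ j := by
      rintro rfl
      exact hne (Subtype.ext (hi.symm.trans hj))
    refine inter_empty_of ?_
    intro x hxC hxD
    rw [← hi, hci i] at hxC
    rw [← hj, hci j] at hxD
    exact hij (hxC.symm.trans hxD)
  · rintro ⟨hne, hdisj⟩
    have hS : OneFactor G C.1 := oneFactor_of_isColorClass C.2
    have hT : OneFactor G D.1 := oneFactor_of_isColorClass D.2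
    obtain ⟨κ, hκ, h0, h1⟩ := coloring_of_disjoint hS hT hdisj
    refine ⟨hne, fun i => {f | κ f = i},
      isColoring_iff.2 ⟨κ, proper_iff.1 hκ, fun _ => rfl⟩, ⟨0, ?_⟩, ⟨1, ?_⟩⟩
    · ext f; exact (h0 f).symm
    · ext f; exact (h1 f).symm

/-! ### Vertex colorings of the coloring complex -/

/-- The 3-coloring of `B(X)` determined by a vertex with edges `a`, `b`, `c`. -/
def mkB (G : CubicGraph V E) (a b c : E) :
    Fin 3 → Set {S : Set E // IsColorClass 3 (lineGraph G) S} :=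
  fun i => if i = 0 then phi 3 (lineGraph G) a
    else if i = 1 then phi 3 (lineGraph G) b else phi 3 (lineGraph G) c

lemma mkB_exists_phi {a b c x : E} (hx : x = a ∨ x = b ∨ x = c) :
    ∃ i, mkB G a b c i = phi 3 (lineGraph G) x := by
  rcases hx with rfl|rfl|rfl
  · exact ⟨0, by simp [mkB]⟩
  · exact ⟨1, by simp [mkB]⟩
  · exact ⟨2, by simp [mkB]⟩

lemma mkB_isColoring (hP2 : P2 G) {w : V} {a b c : E}
    (hab : a ≠ b) (hac : a ≠ c) (hbc : b ≠ c)
    (hat : ∀ f, w ∈ G.ends f ↔ f = a ∨ f = b ∨ f = c) :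
    IsColoring 3 (ColoringComplex 3 (lineGraph G)) (mkB G a b c) := by
  have hwa : w ∈ G.ends a := (hat a).2 (Or.inl rfl)
  have hwb : w ∈ G.ends b := (hat b).2 (Or.inr (Or.inl rfl))
  have hwc : w ∈ G.ends c := (hat c).2 (Or.inr (Or.inr rfl))
  have hmem : ∀ (C : {S : Set E // IsColorClass 3 (lineGraph G) S}) (i : Fin 3),
      C ∈ mkB G a b c i ↔ (i = 0 ∧ a ∈ C.1) ∨ (i = 1 ∧ b ∈ C.1) ∨ (i = 2 ∧ c ∈ C.1) := by
    intro C i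
    rcases fin3_cases 0 1 2 i (by decide) (by decide) (by decide) with rfl|rfl|rfl
    · simp [mkB, phi]
    · simp [mkB, phi]
    · simp [mkB, phi]
  constructor
  · intro C
    have h1f : OneFactor G C.1 := oneFactor_of_isColorClass C.2
    obtain ⟨y, ⟨hyC, hyw⟩, -⟩ := h1f w
    have huniq : ∀ z, z ∈ C.1 → w ∈ G.ends z → z = y := fun z hz hzw =>
      h1f.eq_at hz hzw hyC hyw
    rcases (hat y).1 hyw with rfl|rfl|rfl
    · refine ⟨0, (hmem C 0).2 (Or.inl ⟨rfl, hyC⟩), ?_⟩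
      intro i hi
      rcases (hmem C i).1 hi with ⟨h, hm⟩|⟨h, hm⟩|⟨h, hm⟩
      · exact h
      · exact absurd (huniq b hm hwb) hab.symm  -- b = a contradicts a ≠ b
      · exact absurd (huniq c hm hwc) hac.symm
    · refine ⟨1, (hmem C 1).2 (Or.inr (Or.inl ⟨rfl, hyC⟩)), ?_⟩
      intro i hi
      rcases (hmem C i).1 hi with ⟨h, hm⟩|⟨h, hm⟩|⟨h, hm⟩
      · exact absurd (huniq a hm hwa) hab
      · exact h
      · exact absurd (huniq c hm hwc) hbc.symm
    · refine ⟨2, (hmem C 2).2 (Or.inr (Or.inr ⟨rfl, hyC⟩)), ?_⟩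
      intro i hi
      rcases (hmem C i).1 hi with ⟨h, hm⟩|⟨h, hm⟩|⟨h, hm⟩
      · exact absurd (huniq a hm hwa) hac
      · exact absurd (huniq b hm hwb) hbc
      · exact h
  · intro i C hC D hD hadj
    obtain ⟨hne, hdisj⟩ := (cc_adj hP2).1 hadj
    rcases (hmem C i).1 hC with ⟨h, hmC⟩|⟨h, hmC⟩|⟨h, hmC⟩ <;>
      rcases (hmem D i).1 hD with ⟨h', hmD⟩|⟨h', hmD⟩|⟨h', hmD⟩ <;>
      first
        | exact not_mem_of_inter_empty hdisj hmC hmD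
        | (rw [h] at h'; exact absurd h' (by decide))
        | (rw [h'] at h; exact absurd h (by decide))

/-! ### Every color class of `B(X)`-colorings is a `phi`-set -/

lemma classes_are_phi (hP1 : P1 G) (hP2 : P2 G) (hP5 : P5 G)
    {cB : Fin 3 → Set {S : Set E // IsColorClass 3 (lineGraph G) S}}
    (hcB : IsColoring 3 (ColoringComplex 3 (lineGraph G)) cB) :
    ∃ w : V, ∀ i : Fin 3, ∃ x : E, w ∈ G.ends x ∧ cB i = phi 3 (lineGraph G) x := by
  classical
  obtain ⟨κB, hκBp, hciB⟩ := isColoring_iff.1 hcB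
  set cl : Set E → Fin 3 :=
    fun S => if h : IsColorClass 3 (lineGraph G) S then κB ⟨S, h⟩ else 0 with hcldef
  have hclC : ∀ (C : {S : Set E // IsColorClass 3 (lineGraph G) S}), cl C.1 = κB C := by
    intro C
    rw [hcldef]
    simp only [dif_pos C.2]
  have hclP : ∀ S T, OneFactor G S → OneFactor G T → S ≠ T → S ∩ T = ∅ → cl S ≠ cl T := by
    intro S T hS hT hne hdisj
    have hS' := (isColorClass_iff_oneFactor hP2).2 hS
    have hT' := (isColorClass_iff_oneFactor hP2).2 hT
    rw [hcldef]
    simp only [dif_pos hS', dif_pos hT']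
    exact hκBp _ _ ((cc_adj hP2).2 ⟨fun h => hne (Subtype.ext_iff.1 h), hdisj⟩)
  obtain ⟨w, hw⟩ := hP5 cl hclP
  obtain ⟨κ₀, hκ₀⟩ := hP1
  set cls : E → Set E := fun x => {f | κ₀ f = κ₀ x} with hclsdef
  have hcls1f : ∀ x, OneFactor G (cls x) := fun x => hκ₀.oneFactor _
  have hclsmem : ∀ x, x ∈ cls x := fun x => rfl
  -- distinct class values for distinct edges at w
  have vdist : ∀ x y, w ∈ G.ends x → w ∈ G.ends y → x ≠ y → cl (cls x) ≠ cl (cls y) := by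
    intro x y hx hy hne
    have hcol : κ₀ x ≠ κ₀ y := hκ₀ hne (shares w hx hy)
    refine hclP _ _ (hcls1f x) (hcls1f y) ?_ ?_
    · intro h
      have : x ∈ cls y := h ▸ hclsmem x
      exact hcol this
    · refine inter_empty_of ?_
      intro z hz1 hz2
      have e1 : κ₀ z = κ₀ x := hz1
      have e2 : κ₀ z = κ₀ y := hz2
      exact hcol (e1.symm.trans e2)
  -- the class value of any B-vertex is determined by its w-edge
  have key : ∀ x, w ∈ G.ends x → ∀ (C : {S : Set E // IsColorClass 3 (lineGraph G) S}),
      x ∈ C.1 → cl C.1 = cl (cls x) := by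
    intro x hx C hxC
    have h1f : OneFactor G C.1 := oneFactor_of_isColorClass C.2
    refine hw C.1 (cls x) h1f (hcls1f x) ?_
    intro z hz
    constructor
    · intro hzC
      have : z = x := h1f.eq_at hzC hz hxC hx
      rw [this]
      exact hclsmem x
    · intro hzcls
      have hcol : κ₀ z = κ₀ x := hzcls
      have : z = x := by
        by_contra hne
        exact hκ₀ hne (shares w hz hx) hcol
      rw [this]
      exact hxC
  -- main: the class of value cl (cls x) is phi x
  have main : ∀ x, w ∈ G.ends x → cB (cl (cls x)) = phi 3 (lineGraph G) x := by
    intro x hx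
    ext C
    rw [hciB]
    constructor
    · intro hC
      have hκBC : κB C = cl (cls x) := hC
      have h1f : OneFactor G C.1 := oneFactor_of_isColorClass C.2
      obtain ⟨y, ⟨hyC, hyw⟩, -⟩ := h1f w
      have : cl C.1 = cl (cls y) := key y hyw C hyC
      rw [hclC C, hκBC] at this
      have hyx : y = x := by
        by_contra hne
        exact vdist y x hyw hx hne this.symm
      show x ∈ C.1
      exact hyx ▸ hyC
    · intro hC
      have hxC : x ∈ C.1 := hC
      show κB C = cl (cls x)
      rw [← hclC C]
      exact key x hx C hxC
  obtain ⟨a, b, c, hab, hac, hbc, hat⟩ := G.cubic w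
  have hwa : w ∈ G.ends a := (hat a).2 (Or.inl rfl)
  have hwb : w ∈ G.ends b := (hat b).2 (Or.inr (Or.inl rfl))
  have hwc : w ∈ G.ends c := (hat c).2 (Or.inr (Or.inr rfl))
  refine ⟨w, fun i => ?_⟩
  rcases fin3_cases (cl (cls a)) (cl (cls b)) (cl (cls c)) i
      (vdist a b hwa hwb hab) (vdist a c hwa hwc hac) (vdist b c hwb hwc hbc) with h|h|h
  · exact ⟨a, hwa, h ▸ main a hwa⟩
  · exact ⟨b, hwb, h ▸ main b hwb⟩
  · exact ⟨c, hwc, h ▸ main c hwc⟩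

/-! ### `phi` lands in color classes of `B(X)` and is injective -/

lemma phi_isColorClass (hP2 : P2 G) (x : E) :
    IsColorClass 3 (ColoringComplex 3 (lineGraph G)) (phi 3 (lineGraph G) x) := by
  obtain ⟨w, hw⟩ := ends_nonempty G x
  obtain ⟨a, b, c, hab, hac, hbc, hat⟩ := G.cubic w
  obtain ⟨i, hi⟩ := mkB_exists_phi (G := G) (a := a) (b := b) (c := c) ((hat x).1 hw)
  exact ⟨mkB G a b c, mkB_isColoring hP2 hab hac hbc hat, i, hi⟩

lemma phi_injective (hP3 : P3 G) {x y : E} (hne : x ≠ y) :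
    phi 3 (lineGraph G) x ≠ phi 3 (lineGraph G) y := by
  obtain ⟨κ, hκ, hd⟩ := hP3 x y hne
  have hcc : IsColorClass 3 (lineGraph G) {f | κ f = κ x} :=
    isColorClass_iff_aux.2 ⟨κ, hκ, κ x, rfl⟩
  intro heq
  have hCx : (⟨{f | κ f = κ x}, hcc⟩ : {S : Set E // IsColorClass 3 (lineGraph G) S})
      ∈ phi 3 (lineGraph G) x := rfl
  rw [heq] at hCx
  have : κ y = κ x := hCx
  exact hd this.symm

end CTwork
/-- Every cubic tree (a graph obtained from a tree by adding half-edges so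
that every vertex is incident with exactly three edges) is edge-reflexive. -/
theorem cubic_tree_edgeReflexive {V E : Type*} [DecidableEq V] [Fintype V] [Fintype E]
    (G : CubicGraph V E) (htree : (underlying G).IsTree) :
    EdgeReflexive G := by
  classical
  obtain ⟨hP1, hP2, hP3, hP4, hP5⟩ := CTwork.master G htree
  -- the canonical bijection
  have hinj : Function.Injective (fun x : E =>
      (⟨phi 3 (lineGraph G) x, CTwork.phi_isColorClass hP2 x⟩ :
        {T // IsColorClass 3 (ColoringComplex 3 (lineGraph G)) T})) := by
    intro x y h
    by_contra hne
    exact CTwork.phi_injective hP3 hne (congrArg Subtype.val h)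
  have hsurj : Function.Surjective (fun x : E =>
      (⟨phi 3 (lineGraph G) x, CTwork.phi_isColorClass hP2 x⟩ :
        {T // IsColorClass 3 (ColoringComplex 3 (lineGraph G)) T})) := by
    rintro ⟨T, cB, hcB, i, hi⟩
    obtain ⟨w, hw⟩ := CTwork.classes_are_phi hP1 hP2 hP5 hcB
    obtain ⟨x, hxw, hx⟩ := hw i
    exact ⟨x, Subtype.ext (hx.symm.trans hi)⟩
  let eqv := Equiv.ofBijective _ ⟨hinj, hsurj⟩
  refine ⟨⟨eqv, ?_⟩, fun v => rfl⟩
  intro x y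
  constructor
  · rintro ⟨hne, cB, hcB, ⟨i, hi⟩, ⟨j, hj⟩⟩
    obtain ⟨w, hw⟩ := CTwork.classes_are_phi hP1 hP2 hP5 hcB
    obtain ⟨x', hx'w, hxi⟩ := hw i
    obtain ⟨y', hy'w, hyj⟩ := hw j
    have hphix : cB i = phi 3 (lineGraph G) x := hi
    have hphiy : cB j = phi 3 (lineGraph G) y := hj
    have hxx : x = x' := by
      by_contra hne'
      exact CTwork.phi_injective hP3 hne' (hphix.symm.trans hxi)
    have hyy : y = y' := by
      by_contra hne'
      exact CTwork.phi_injective hP3 hne' (hphiy.symm.trans hyj)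
    have hxy : x ≠ y := by
      rintro rfl
      exact hne rfl
    exact ⟨hxy, CTwork.shares w (hxx ▸ hx'w) (hyy ▸ hy'w)⟩
  · rintro ⟨hxy, hshare⟩
    obtain ⟨w, hw⟩ := hshare
    have hwx : w ∈ G.ends x := (Finset.mem_inter.1 hw).1
    have hwy : w ∈ G.ends y := (Finset.mem_inter.1 hw).2
    obtain ⟨a, b, c, hab, hac, hbc, hat⟩ := G.cubic w
    refine ⟨fun h => hxy (hinj h), CTwork.mkB G a b c,
      CTwork.mkB_isColoring hP2 hab hac hbc hat, ?_, ?_⟩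
    · obtain ⟨i, hi⟩ := CTwork.mkB_exists_phi (G := G) (a := a) (b := b) (c := c)
        ((hat x).1 hwx)
      exact ⟨i, hi⟩
    · obtain ⟨j, hj⟩ := CTwork.mkB_exists_phi (G := G) (a := a) (b := b) (c := c)
        ((hat y).1 hwy)
      exact ⟨j, hj⟩
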